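/- Let G be a framework for a matroid M and let e ∈ E(M). Then (a) G − e is a framework for M \ e; (b) if e is not a loop-edge of G, then G/e is a framework for M/e; and (c) if e is a loop-edge of G at a vertex v with no other loop-edge at v, and e is not a loop of M, then G∘e is a framework for M/e. -/

import Mathlib

open Set Matroid
open scoped Classical

namespace QuasiGraphicPaper

universe u v

/-- A finite multigraph: a set `V` of vertices (in an ambient type `α`), a set `E` of
edges (in an ambient type `β`), and an incidence function assigning to each edge an
unordered pair of endpoints; loop-edges and parallel edges are allowed. -/
structure Graph (α : Type u) (β : Type v) where
  V : Set α
  E : Set β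
  ends : β → Sym2 α
  finV : V.Finite
  finE : E.Finite
  ends_mem : ∀ ⦃e⦄, e ∈ E → ∀ ⦃x⦄, x ∈ ends e → x ∈ V

namespace Graph

variable {α : Type u} {β : Type v}

/-- `e` is a loop-edge of `G` at the vertex `v`. -/
def IsLoopAt (G : Graph α β) (e : β) (v : α) : Prop :=
  e ∈ G.E ∧ G.ends e = Sym2.diag v

/-- `loops_G(v)`: the set of loop-edges of `G` at `v`. -/
def loopsAt (G : Graph α β) (v : α) : Set β := {e | G.IsLoopAt e v}

/-- Two vertices are adjacent if some edge of `G` has them as its two endpoints. -/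
def Adj (G : Graph α β) (u v : α) : Prop := ∃ e ∈ G.E, G.ends e = s(u, v)

/-- A graph is connected if any two of its vertices are joined by a walk.
(The graph with no vertices is connected.) -/
def Connected (G : Graph α β) : Prop :=
  ∀ u ∈ G.V, ∀ v ∈ G.V, Relation.ReflTransGen G.Adj u v

/-- Delete a set `X` of vertices: remove the vertices in `X` and all edges meeting `X`. -/
def deleteVertices (G : Graph α β) (X : Set α) : Graph α β where
  V := G.V \ X
  E := {e ∈ G.E | ∀ x ∈ G.ends e, x ∉ X}
  ends := G.ends
  finV := G.finV.sdiff (t := X)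
  finE := G.finE.subset (sep_subset _ _)
  ends_mem := fun e he x hx => ⟨G.ends_mem he.1 hx, he.2 x hx⟩

/-- `G − v`: delete the single vertex `v`. -/
abbrev deleteVertex (G : Graph α β) (v : α) : Graph α β := G.deleteVertices {v}

/-- `G − e`: delete the edge `e` (keeping all vertices). -/
def deleteEdge (G : Graph α β) (e : β) : Graph α β where
  V := G.V
  E := G.E \ {e}
  ends := G.ends
  finV := G.finV
  finE := G.finE.sdiff
  ends_mem := fun f hf x hx => G.ends_mem hf.1 hx

/-- `G[X]`: the subgraph of `G` with edge set `X` (intersected with `E(G)`) and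
no isolated vertices. -/
def restrictEdges (G : Graph α β) (X : Set β) : Graph α β where
  V := {v | ∃ e ∈ X ∩ G.E, v ∈ G.ends e}
  E := X ∩ G.E
  ends := G.ends
  finV := G.finV.subset (by rintro v ⟨e, ⟨-, he⟩, hv⟩; exact G.ends_mem he hv)
  finE := G.finE.subset inter_subset_right
  ends_mem := fun e he x hx => ⟨e, he, hx⟩

/-- The connected component of `G` containing the vertex `v`, as a graph. -/
def componentOf (G : Graph α β) (v : α) : Graph α β where
  V := {u ∈ G.V | Relation.ReflTransGen G.Adj v u}
  E := {e ∈ G.E | ∀ x ∈ G.ends e, Relation.ReflTransGen G.Adj v x}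
  ends := G.ends
  finV := G.finV.subset (sep_subset _ _)
  finE := G.finE.subset (sep_subset _ _)
  ends_mem := fun e he x hx => ⟨G.ends_mem he.1 hx, he.2 x hx⟩

/-- `H` is a connected component of `G`. -/
def IsComponentOf (H G : Graph α β) : Prop := ∃ v ∈ G.V, H = G.componentOf v

/-- The number of connected components of `G`. -/
noncomputable def ncomponents (G : Graph α β) : ℕ :=
  {H : Graph α β | H.IsComponentOf G}.ncard

/-- `G` has at most two connected components: among any three vertices, two are joined. -/
def AtMostTwoComponents (G : Graph α β) : Prop :=
  ∀ u ∈ G.V, ∀ v ∈ G.V, ∀ w ∈ G.V,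
    Relation.ReflTransGen G.Adj u v ∨ Relation.ReflTransGen G.Adj u w ∨
      Relation.ReflTransGen G.Adj v w

/-- The degree of a vertex: loop-edges count twice. -/
noncomputable def degree (G : Graph α β) (v : α) : ℕ :=
  ({e ∈ G.E | v ∈ G.ends e ∧ ¬ (G.ends e).IsDiag}).ncard +
    2 * ({e ∈ G.E | G.ends e = Sym2.diag v}).ncard

/-- `G` is a cycle: it is connected, has at least one edge, and every vertex has
degree two. -/
def IsCycleGraph (G : Graph α β) : Prop :=
  G.E.Nonempty ∧ G.Connected ∧ ∀ v ∈ G.V, G.degree v = 2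

/-- `C` is (the edge set of) a cycle of `G`. -/
def CycleSet (G : Graph α β) (C : Set β) : Prop :=
  C ⊆ G.E ∧ (G.restrictEdges C).IsCycleGraph

/-- A forest: a graph with no cycles (in particular no loop-edges). -/
def IsForest (G : Graph α β) : Prop := ∀ C, ¬ G.CycleSet C

/-- `H` is a subgraph of `G`. -/
def IsSubgraph (H G : Graph α β) : Prop := H.V ⊆ G.V ∧ H.E ⊆ G.E ∧ H.ends = G.ends

/-- `G` is `k`-connected if `G − X` is connected for every vertex set `X` with `|X| < k`. -/
def KConnected (G : Graph α β) (k : ℕ) : Prop :=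
  ∀ X : Set α, X.encard < k → (G.deleteVertices X).Connected

/-- A theta: a `2`-connected graph with exactly two vertices of degree three, all
other vertices having degree two. -/
def IsTheta (H : Graph α β) : Prop :=
  H.KConnected 2 ∧
    ∃ a ∈ H.V, ∃ b ∈ H.V, a ≠ b ∧ H.degree a = 3 ∧ H.degree b = 3 ∧
      ∀ v ∈ H.V, v ≠ a → v ≠ b → H.degree v = 2

/-- `G / e`: contract the non-loop edge `e` with endpoints `x` and `y`
(identifying `y` with `x` and deleting `e`). -/
noncomputable def contractEdge (G : Graph α β) (e : β) (x y : α) (he : e ∈ G.E)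
    (hxy : G.ends e = s(x, y)) (hne : x ≠ y) : Graph α β where
  V := G.V \ {y}
  E := G.E \ {e}
  ends := fun f => (G.ends f).map (fun w => if w = y then x else w)
  finV := G.finV.sdiff
  finE := G.finE.sdiff
  ends_mem := by
    rintro f ⟨hf, -⟩ z hz
    try dsimp only at hz
    rw [Sym2.mem_map] at hz
    obtain ⟨w, hw, rfl⟩ := hz
    by_cases hwy : w = y
    · rw [if_pos hwy]
      have hx : x ∈ G.ends e := by rw [hxy]; exact Sym2.mem_mk_left x y
      exact ⟨G.ends_mem he hx, by simp [hne]⟩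
    · rw [if_neg hwy]
      exact ⟨G.ends_mem hf hw, by simp [hwy]⟩

/-- `G ∘ e`: for a loop-edge `e` at a vertex `v` which is the unique loop-edge at `v`,
delete `v` and `e`, and replace every other edge `f = vw` at `v` by a loop-edge at `w`. -/
noncomputable def circ (G : Graph α β) (e : β) (v : α)
    (hno : ∀ f ∈ G.E, G.ends f = Sym2.diag v → f = e) : Graph α β where
  V := G.V \ {v}
  E := G.E \ {e}
  ends := fun f =>
    if h : f ∈ G.E ∧ f ≠ e ∧ v ∈ G.ends f then Sym2.diag (Sym2.Mem.other h.2.2)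
    else G.ends f
  finV := G.finV.sdiff
  finE := G.finE.sdiff
  ends_mem := by
    rintro f ⟨hf, hfe⟩ z hz
    try dsimp only at hz
    have hfe' : f ≠ e := fun h' => hfe (by simp [h'])
    by_cases h : f ∈ G.E ∧ f ≠ e ∧ v ∈ G.ends f
    · rw [dif_pos h] at hz
      have hze : z = Sym2.Mem.other h.2.2 := by
        have h2 : z ∈ s(Sym2.Mem.other h.2.2, Sym2.Mem.other h.2.2) := hz
        rw [Sym2.mem_iff] at h2
        tauto
      subst hze
      refine ⟨G.ends_mem hf (Sym2.other_mem h.2.2), ?_⟩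
      simp only [mem_singleton_iff]
      intro hzv
      apply h.2.1
      apply hno f hf
      show G.ends f = s(v, v)
      rw [← Sym2.other_spec h.2.2, hzv]
    · rw [dif_neg h] at hz
      refine ⟨G.ends_mem hf hz, ?_⟩
      simp only [mem_singleton_iff]
      intro hzv
      subst hzv
      exact h ⟨hf, hfe', hz⟩

end Graph

/-! ### Matroid notions -/

variable {α : Type u} {β : Type v}

/-- The rank `r_M(X)` of a set `X` in a matroid `M`: the maximum size of an
independent subset of `X`. -/
noncomputable def rank (M : Matroid β) (X : Set β) : ℕ :=
  (⨆ I ∈ {I : Set β | M.Indep I ∧ I ⊆ X}, I.encard).toNat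

/-- `C` is a circuit of `M` : a minimal dependent set. -/
def IsCircuit (M : Matroid β) (C : Set β) : Prop :=
  M.Dep C ∧ ∀ D, D ⊂ C → M.Indep D

/-- `M \ D` : delete the set `D` from the matroid `M`. -/
def deleteM (M : Matroid β) (D : Set β) : Matroid β := M ↾ (M.E \ D)

/-- `M / C` : contract the set `C` in the matroid `M`. -/
def contractM (M : Matroid β) (C : Set β) : Matroid β := (M✶ ↾ (M✶.E \ C))✶

/-- `G` is a weak framework for `M`: conditions (1)–(3). -/
def WeakFramework (G : Graph α β) (M : Matroid β) : Prop :=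
  G.E = M.E ∧
  (∀ H : Graph α β, H.IsComponentOf G → rank M H.E ≤ H.V.ncard) ∧
  (∀ v ∈ G.V,
    M.closure (G.deleteVertex v).E ⊆ (G.deleteVertex v).E ∪ G.loopsAt v)

/-- `G` is a framework for `M`: conditions (1)–(4). -/
def Framework (G : Graph α β) (M : Matroid β) : Prop :=
  WeakFramework G M ∧
    ∀ C, IsCircuit M C → (G.restrictEdges C).AtMostTwoComponents

/-- `M` is the cycle matroid `M(G)` of `G` : the ground set of `M` is `E(G)`, and the
circuits of `M` are exactly the edge sets of cycles of `G`. -/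
def IsCycleMatroidOf (G : Graph α β) (M : Matroid β) : Prop :=
  M.E = G.E ∧ ∀ C, IsCircuit M C ↔ G.CycleSet C

/-- A matroid is graphic if it is the cycle matroid of some graph. -/
def Graphic (M : Matroid β) : Prop :=
  ∃ (γ : Type v) (G : Graph γ β), IsCycleMatroidOf G M

/-- A matroid is quasi-graphic if it has a framework. -/
def QuasiGraphic (M : Matroid β) : Prop :=
  ∃ (γ : Type v) (G : Graph γ β), Framework G M

/-- `M` is a lift of `N` if some single-element extension `M'` of `M` satisfies
`M' \ e = M` and `M' / e = N`. -/
def IsLiftOf (M N : Matroid β) : Prop :=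
  ∃ M' : Matroid (Option β), (none : Option β) ∈ M'.E ∧
    deleteM M' {none} = M.map some (Option.some_injective β).injOn ∧
    contractM M' {none} = N.map some (Option.some_injective β).injOn

/-- `M` is a lifted-graphic matroid: for some single-element extension `M'` of `M`,
`M' / e` is graphic. -/
def LiftedGraphic (M : Matroid β) : Prop :=
  ∃ M' : Matroid (Option β), (none : Option β) ∈ M'.E ∧
    deleteM M' {none} = M.map some (Option.some_injective β).injOn ∧
    Graphic (contractM M' {none})

/-- `(M, V)` is a framed matroid: `V` is a basis of `M` and every element of `M` is
spanned by a subset of `V` with at most two elements. -/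
def FramedMatroid {γ : Type u} (M : Matroid γ) (V : Set γ) : Prop :=
  M.IsBase V ∧ ∀ e ∈ M.E, ∃ S ⊆ V, S.ncard ≤ 2 ∧ e ∈ M.closure S

/-- `M` is a frame matroid: `M = M' \ V` for some framed matroid `(M', V)`. -/
def FrameMatroid (M : Matroid β) : Prop :=
  ∃ (γ : Type v) (M' : Matroid (β ⊕ γ)) (V : Set (β ⊕ γ)),
    FramedMatroid M' V ∧
      deleteM M' V = M.map Sum.inl Sum.inl_injective.injOn

/-- `M` is `3`-connected: it has no `k`-separation for `k ≤ 2`. -/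
def ThreeConnected (M : Matroid β) : Prop :=
  ∀ X ⊆ M.E, ∀ k : ℕ, k ≤ 2 → (k : ℕ∞) ≤ X.encard → (k : ℕ∞) ≤ (M.E \ X).encard →
    rank M M.E + k ≤ rank M X + rank M (M.E \ X)

/-- `M` is representable over some field. -/
def Representable (M : Matroid β) : Prop :=
  ∃ (F : Type v) (_ : Field F) (W : Type v) (_ : AddCommGroup W) (_ : Module F W)
    (φ : β → W), ∀ I ⊆ M.E, (M.Indep I ↔ LinearIndependent F (fun x : I => φ x))

/-- A collection `B` of cycles of `G` satisfies the theta-property if there is no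
theta-subgraph of `G` with exactly two of its three cycles in `B`. -/
def ThetaProperty (G : Graph α β) (B : Set (Set β)) : Prop :=
  ∀ H : Graph α β, H.IsSubgraph G → H.IsTheta →
    ∀ C1 C2 C3, H.CycleSet C1 → H.CycleSet C2 → H.CycleSet C3 →
      C1 ≠ C2 → C2 ≠ C3 → C1 ≠ C3 → C1 ∈ B → C2 ∈ B → C3 ∈ B

/-! ### Auxiliary lemmas -/

section RankAPI

variable {β : Type v} {M : Matroid β} {I X Y : Set β}

lemma rank_eq_ncard_of_basis' (hX : X.Finite) (hI : M.IsBasis' I X) : rank M X = I.ncard := by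
  have hsup : (⨆ J ∈ {J : Set β | M.Indep J ∧ J ⊆ X}, J.encard) = I.encard := by
    apply le_antisymm
    · refine iSup₂_le fun J hJ => ?_
      obtain ⟨J', hJ', hJJ'⟩ := hJ.1.subset_isBasis'_of_subset hJ.2
      have h1 : (M ↾ X).IsBase J' := isBase_restrict_iff'.2 hJ'
      have h2 : (M ↾ X).IsBase I := isBase_restrict_iff'.2 hI
      calc J.encard ≤ J'.encard := encard_mono hJJ'
        _ = I.encard := h1.encard_eq_encard_of_isBase h2
    · exact le_iSup₂_of_le I ⟨hI.indep, hI.subset⟩ le_rfl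
  rw [rank, hsup, Set.ncard_def]

lemma ncard_le_rank_of_indep (hX : X.Finite) (hI : M.Indep I) (hIX : I ⊆ X) :
    I.ncard ≤ rank M X := by
  obtain ⟨J, hJ⟩ := M.exists_isBasis' X
  rw [rank_eq_ncard_of_basis' hX hJ]
  obtain ⟨J', hJ', hJJ'⟩ := hI.subset_isBasis'_of_subset hIX
  have h1 : (M ↾ X).IsBase J' := isBase_restrict_iff'.2 hJ'
  have h2 : (M ↾ X).IsBase J := isBase_restrict_iff'.2 hJ
  have hle : I.encard ≤ J.encard :=
    le_trans (encard_mono hJJ') (le_of_eq (h1.encard_eq_encard_of_isBase h2))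
  have hJfin : J.Finite := hX.subset hJ.subset
  rw [Set.ncard_def, Set.ncard_def]
  exact ENat.toNat_le_toNat hle hJfin.encard_lt_top.ne

lemma rank_mono' (hY : Y.Finite) (hXY : X ⊆ Y) : rank M X ≤ rank M Y := by
  obtain ⟨I, hI⟩ := M.exists_isBasis' X
  rw [rank_eq_ncard_of_basis' (hY.subset hXY) hI]
  exact ncard_le_rank_of_indep hY hI.indep (hI.subset.trans hXY)

lemma rank_indep_eq (hfin : I.Finite) (hI : M.Indep I) : rank M I = I.ncard :=
  rank_eq_ncard_of_basis' hfin hI.isBasis_self.isBasis'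

lemma rank_lt_of_dep (hX : X.Finite) (hdep : ¬ M.Indep X) : rank M X < X.ncard := by
  obtain ⟨I, hI⟩ := M.exists_isBasis' X
  rw [rank_eq_ncard_of_basis' hX hI]
  exact Set.ncard_lt_ncard (hI.subset.ssubset_of_ne fun h => hdep (h ▸ hI.indep)) hX

lemma rank_le_of_indep_imp {N : Matroid β} (hX : X.Finite)
    (h : ∀ I, N.Indep I → M.Indep I) : rank N X ≤ rank M X := by
  obtain ⟨I, hI⟩ := N.exists_isBasis' X
  rw [rank_eq_ncard_of_basis' hX hI]
  exact ncard_le_rank_of_indep hX (h _ hI.indep) hI.subset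

end RankAPI

section ReachAPI

variable {α : Type u} {γ : Type*}

lemma rtg_symm {r : α → α → Prop} (hsym : ∀ a b, r a b → r b a) {a b : α}
    (h : Relation.ReflTransGen r a b) : Relation.ReflTransGen r b a := by
  induction h with
  | refl => exact .refl
  | tail _ h2 ih => exact Relation.ReflTransGen.head (hsym _ _ h2) ih

lemma rtg_lift {r : α → α → Prop} {s : γ → γ → Prop} {f : α → γ}
    (hf : ∀ a b, r a b → Relation.ReflTransGen s (f a) (f b)) {a b : α}
    (h : Relation.ReflTransGen r a b) : Relation.ReflTransGen s (f a) (f b) := by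
  induction h with
  | refl => exact .refl
  | tail _ h2 ih => exact ih.trans (hf _ _ h2)

/-- `n`-step reachability along a relation. -/
def ReachIn (r : α → α → Prop) : ℕ → α → α → Prop
  | 0, a, b => a = b
  | n+1, a, b => ∃ c, r a c ∧ ReachIn r n c b

lemma ReachIn.tail {r : α → α → Prop} : ∀ {n : ℕ} {a b c : α},
    ReachIn r n a b → r b c → ReachIn r (n+1) a c := by
  intro n
  induction n with
  | zero => rintro a b c rfl h; exact ⟨c, h, rfl⟩
  | succ n ih =>
    rintro a b c ⟨m, hm, hmb⟩ h
    exact ⟨m, hm, ih hmb h⟩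

lemma rtg_to_reachIn {r : α → α → Prop} {a b : α} (h : Relation.ReflTransGen r a b) :
    ∃ n, ReachIn r n a b := by
  induction h with
  | refl => exact ⟨0, rfl⟩
  | tail _ h2 ih => obtain ⟨n, hn⟩ := ih; exact ⟨n+1, hn.tail h2⟩

lemma exists_descent {r : α → α → Prop} {U T : Set α}
    (hreach : ∀ u ∈ U, ∃ t ∈ T, Relation.ReflTransGen r u t)
    (hdisj : ∀ u ∈ U, u ∉ T) :
    ∃ d : α → ℕ, ∀ u ∈ U, ∃ z, r u z ∧ d z < d u := by
  classical
  refine ⟨fun a => if h : ∃ n, ∃ t ∈ T, ReachIn r n a t then Nat.find h else 0,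
    fun u hu => ?_⟩
  obtain ⟨t, ht, hrt⟩ := hreach u hu
  obtain ⟨n, hn⟩ := rtg_to_reachIn hrt
  have hu' : ∃ n, ∃ t ∈ T, ReachIn r n u t := ⟨n, t, ht, hn⟩
  obtain ⟨t', ht', hsp⟩ := Nat.find_spec hu'
  rcases hm : Nat.find hu' with _ | m
  · rw [hm] at hsp
    exact absurd (hsp ▸ ht' : u ∈ T) (hdisj u hu)
  · rw [hm] at hsp
    obtain ⟨c, hc, hcm⟩ := hsp
    have hc' : ∃ n, ∃ t ∈ T, ReachIn r n c t := ⟨m, t', ht', hcm⟩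
    refine ⟨c, hc, ?_⟩
    beta_reduce
    rw [dif_pos hu', dif_pos hc', hm]
    exact lt_of_le_of_lt (Nat.find_min' hc' ⟨t', ht', hcm⟩) (Nat.lt_succ_self m)

end ReachAPI

section ReachAPI2

variable {α : Type u}

lemma rtg_eq_of_no_enter {r : α → α → Prop} {v : α} (hv : ∀ z, r z v → z = v) :
    ∀ {u w}, Relation.ReflTransGen r u w → w = v → u = v := by
  intro u w h
  induction h with
  | refl => exact id
  | tail h1 h2 ih => rintro rfl; exact ih (hv _ h2)

end ReachAPI2

section GraphAPI

variable {α : Type u} {β : Type v}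

lemma Graph.adj_symm (G : Graph α β) {a b : α} (h : G.Adj a b) : G.Adj b a := by
  obtain ⟨f, hf, hends⟩ := h
  exact ⟨f, hf, by rw [hends, Sym2.eq_swap]⟩

/-- Two endpoints of an edge of `H` are joined in `H`. -/
lemma Graph.rtg_of_mem_ends (H : Graph α β) {f : β} (hf : f ∈ H.E) {w w' : α}
    (hw : w ∈ H.ends f) (hw' : w' ∈ H.ends f) :
    Relation.ReflTransGen H.Adj w w' := by
  by_cases hww' : w = w'
  · exact hww' ▸ Relation.ReflTransGen.refl
  · have hspec := Sym2.other_spec hw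
    have hw'' : w' ∈ s(w, Sym2.Mem.other hw) := hspec.symm ▸ hw'
    rw [Sym2.mem_iff] at hw''
    rcases hw'' with rfl | rfl
    · exact absurd rfl hww'
    · exact Relation.ReflTransGen.single ⟨f, hf, hspec.symm⟩

lemma Graph.mem_diag_iff {v x : α} : x ∈ Sym2.diag v ↔ x = v := by
  constructor
  · intro h; rcases Sym2.mem_iff.1 h with h | h <;> exact h
  · rintro rfl; exact Sym2.mem_mk_left _ _

lemma Graph.pair_eq_diag_iff {u z v : α} : s(u, z) = Sym2.diag v ↔ u = v ∧ z = v := by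
  show s(u,z) = s(v,v) ↔ _
  rw [Sym2.eq_iff]
  tauto

end GraphAPI

section Strip

variable {α : Type u} {β : Type v} {G : Graph α β} {M : Matroid β}

/-- The key consequence of framework condition (3): removing from an edge set `Y` all
edges at a vertex `u` that is an endpoint of a non-loop edge of `Y` drops rank. -/
lemma core_step
    (h3 : ∀ v ∈ G.V, M.closure (G.deleteVertex v).E ⊆ (G.deleteVertex v).E ∪ G.loopsAt v)
    (h1 : G.E ⊆ M.E) {Y : Set β} (hY : Y ⊆ G.E) {u z : α} {f : β}
    (hfY : f ∈ Y) (hends : G.ends f = s(u, z)) (hzu : z ≠ u) :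
    rank M {g ∈ Y | u ∉ G.ends g} + 1 ≤ rank M Y := by
  have hYfin : Y.Finite := G.finE.subset hY
  have humem : u ∈ G.ends f := hends ▸ Sym2.mem_mk_left u z
  have huV : u ∈ G.V := G.ends_mem (hY hfY) humem
  obtain ⟨I, hI⟩ := M.exists_isBasis' {g ∈ Y | u ∉ G.ends g}
  have hsubY : {g ∈ Y | u ∉ G.ends g} ⊆ Y := sep_subset _ _
  have hsub : {g ∈ Y | u ∉ G.ends g} ⊆ (G.deleteVertex u).E := by
    rintro g ⟨hgY, hgu⟩
    exact ⟨hY hgY, fun x hx hxu => hgu (by rwa [← hxu])⟩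
  have hfcl : f ∉ M.closure I := by
    rw [hI.closure_eq_closure]
    intro hf
    have hmem := (h3 u huV) ((M.closure_subset_closure hsub) hf)
    rcases hmem with h | h
    · exact h.2 u humem rfl
    · have h2 : G.ends f = Sym2.diag u := h.2
      rw [hends] at h2
      exact hzu (Graph.pair_eq_diag_iff.1 h2).2
  have hfI : f ∉ I := fun h => hfcl (M.mem_closure_of_mem' h (h1 (hY hfY)))
  have hins : M.Indep (insert f I) := by
    rw [hI.indep.insert_indep_iff_of_notMem hfI]
    exact ⟨h1 (hY hfY), hfcl⟩
  have hle : (insert f I).ncard ≤ rank M Y :=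
    ncard_le_rank_of_indep hYfin hins (insert_subset hfY (hI.subset.trans hsubY))
  rw [ncard_insert_of_notMem hfI (hYfin.subset (hI.subset.trans hsubY))] at hle
  rwa [rank_eq_ncard_of_basis' (hYfin.subset hsubY) hI]

/-- Iterated stripping: removing all edges meeting a vertex set `U`, each vertex of which
has an escape edge decreasing a potential `d`, drops the rank by at least `|U|`. -/
lemma lstrip
    (h3 : ∀ v ∈ G.V, M.closure (G.deleteVertex v).E ⊆ (G.deleteVertex v).E ∪ G.loopsAt v)
    (h1 : G.E ⊆ M.E) (d : α → ℕ) :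
    ∀ (n : ℕ) (U : Set α) (Y : Set β), U ⊆ G.V → Y ⊆ G.E → U.ncard = n →
    (∀ u ∈ U, ∃ f ∈ Y, ∃ z, G.ends f = s(u, z) ∧ d z < d u) →
    rank M {g ∈ Y | ∀ x ∈ G.ends g, x ∉ U} + U.ncard ≤ rank M Y := by
  intro n
  induction n with
  | zero =>
    intro U Y hUV hY hcard _
    have hU : U = ∅ := (Set.ncard_eq_zero (G.finV.subset hUV)).1 hcard
    subst hU
    have : {g ∈ Y | ∀ x ∈ G.ends g, x ∉ (∅ : Set α)} = Y := by
      ext g; simp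
    rw [this, Set.ncard_empty]
    simp
  | succ n ih =>
    intro U Y hUV hY hcard hesc
    have hUfin : U.Finite := G.finV.subset hUV
    have hUne : U.Nonempty := by
      rw [Set.nonempty_iff_ne_empty]
      intro h; rw [h] at hcard; simp at hcard
    obtain ⟨u0, hu0, hmax⟩ := Set.exists_max_image U d hUfin hUne
    obtain ⟨f0, hf0, z0, hz0, hdz0⟩ := hesc u0 hu0
    have hz0u0 : z0 ≠ u0 := fun h => absurd hdz0 (by rw [h]; exact lt_irrefl _)
    have hcore := core_step h3 h1 hY hf0 hz0 hz0u0
    have hYsub : {g ∈ Y | u0 ∉ G.ends g} ⊆ G.E := fun g hg => hY hg.1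
    have hUeq : U.ncard = (U \ {u0}).ncard + 1 :=
      (Set.ncard_diff_singleton_add_one hu0 hUfin).symm
    have hcard' : (U \ {u0}).ncard = n := by omega
    have hesc' : ∀ u ∈ U \ {u0}, ∃ f ∈ {g ∈ Y | u0 ∉ G.ends g}, ∃ z,
        G.ends f = s(u, z) ∧ d z < d u := by
      rintro u ⟨huU, huu0⟩
      simp only [mem_singleton_iff] at huu0
      obtain ⟨f, hf, z, hz, hdz⟩ := hesc u huU
      refine ⟨f, ⟨hf, ?_⟩, z, hz, hdz⟩
      rw [hz, Sym2.mem_iff]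
      rintro (h | h)
      · exact huu0 h.symm
      · subst h
        exact absurd (lt_of_lt_of_le hdz (hmax u huU)) (lt_irrefl _)
    have ih' := ih (U \ {u0}) {g ∈ Y | u0 ∉ G.ends g} (diff_subset.trans hUV) hYsub
      hcard' hesc'
    have hsets : {g ∈ {g ∈ Y | u0 ∉ G.ends g} | ∀ x ∈ G.ends g, x ∉ U \ {u0}}
        = {g ∈ Y | ∀ x ∈ G.ends g, x ∉ U} := by
      ext g
      constructor
      · rintro ⟨⟨hgY, hgu0⟩, hg⟩
        refine ⟨hgY, fun x hx hxU => ?_⟩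
        by_cases hxu0 : x = u0
        · exact hgu0 (hxu0 ▸ hx)
        · exact hg x hx ⟨hxU, hxu0⟩
      · rintro ⟨hgY, hg⟩
        exact ⟨⟨hgY, fun h => hg u0 h hu0⟩, fun x hx hxU => hg x hx hxU.1⟩
    rw [hsets] at ih'
    rw [hUeq]
    calc rank M {g ∈ Y | ∀ x ∈ G.ends g, x ∉ U} + ((U \ {u0}).ncard + 1)
        = (rank M {g ∈ Y | ∀ x ∈ G.ends g, x ∉ U} + (U \ {u0}).ncard) + 1 := by omega
      _ ≤ rank M {g ∈ Y | u0 ∉ G.ends g} + 1 := by omega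
      _ ≤ rank M Y := hcore

/-- Main counting bound: the rank of the set of edges of a component `K` of `G` having
all their endpoints in a nonempty set `T ⊆ V(K)` is at most `|T|`. -/
lemma compbound
    (h1 : G.E = M.E)
    (h2 : ∀ H : Graph α β, H.IsComponentOf G → rank M H.E ≤ H.V.ncard)
    (h3 : ∀ v ∈ G.V, M.closure (G.deleteVertex v).E ⊆ (G.deleteVertex v).E ∪ G.loopsAt v)
    {r0 : α} (hr0 : r0 ∈ G.V) {T : Set α}
    (hT : T ⊆ (G.componentOf r0).V) (hTne : T.Nonempty) :
    rank M {f ∈ (G.componentOf r0).E | ∀ x ∈ G.ends f, x ∈ T} ≤ T.ncard := by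
  set K := G.componentOf r0 with hK
  have hKV : K.V = {u ∈ G.V | Relation.ReflTransGen G.Adj r0 u} := rfl
  have hKE : K.E = {f ∈ G.E | ∀ x ∈ G.ends f, Relation.ReflTransGen G.Adj r0 x} := rfl
  set U := K.V \ T with hU
  obtain ⟨t0, ht0⟩ := hTne
  have ht0K : t0 ∈ K.V := hT ht0
  have hreach : ∀ u ∈ U, ∃ t ∈ T, Relation.ReflTransGen G.Adj u t := by
    rintro u ⟨huK, -⟩
    exact ⟨t0, ht0, (rtg_symm (fun a b => G.adj_symm) huK.2).trans ht0K.2⟩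
  have hdisj : ∀ u ∈ U, u ∉ T := fun u hu => hu.2
  obtain ⟨d, hd⟩ := exists_descent hreach hdisj
  have hesc : ∀ u ∈ U, ∃ f ∈ K.E, ∃ z, G.ends f = s(u, z) ∧ d z < d u := by
    intro u hu
    obtain ⟨z, ⟨f, hfE, hends⟩, hdz⟩ := hd u hu
    refine ⟨f, ⟨hfE, ?_⟩, z, hends, hdz⟩
    intro x hx
    rw [hends, Sym2.mem_iff] at hx
    rcases hx with rfl | rfl
    · exact hu.1.2
    · exact hu.1.2.tail ⟨f, hfE, hends⟩
  have hstrip := lstrip h3 (h1.le) d U.ncard U K.E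
    (fun u hu => hu.1.1) (sep_subset _ _) rfl hesc
  have hsets : {g ∈ K.E | ∀ x ∈ G.ends g, x ∉ U} = {f ∈ K.E | ∀ x ∈ G.ends f, x ∈ T} := by
    ext g
    refine and_congr_right fun hg => ?_
    constructor
    · intro h x hx
      have hxK : x ∈ K.V := ⟨G.ends_mem hg.1 hx, hg.2 x hx⟩
      by_contra hxT
      exact h x hx ⟨hxK, hxT⟩
    · intro h x hx hxU
      exact hxU.2 (h x hx)
  rw [hsets] at hstrip
  have hKle := h2 K ⟨r0, hr0, rfl⟩
  have hcardeq : U.ncard + T.ncard = K.V.ncard := by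
    rw [hU, Set.ncard_diff hT (G.finV.subset (hT.trans (fun x hx => hx.1)))]
    have : T.ncard ≤ K.V.ncard :=
      Set.ncard_le_ncard hT (G.finV.subset (fun x hx => hx.1))
    omega
  omega

end Strip

section ContractAPI

variable {β : Type v} {M : Matroid β} {e : β} {I X : Set β}

lemma contractM_ground : (contractM M {e}).E = M.E \ {e} := rfl

lemma contractM_indep_iff (hfin : M.E.Finite) (he : M.Indep {e}) :
    (contractM M {e}).Indep I ↔ e ∉ I ∧ M.Indep (I ∪ {e}) := by
  have heE : e ∈ M.E := he.subset_ground rfl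
  have hground : (M✶ ↾ (M✶.E \ {e})).E = M.E \ {e} := rfl
  constructor
  · intro hNI
    obtain ⟨hIR, B, hB, hdisj⟩ := (dual_indep_iff_exists' (M := M✶ ↾ (M✶.E \ {e}))).1 hNI
    have hIR' : I ⊆ M.E \ {e} := hIR
    have hB' : M✶.IsBasis' B (M✶.E \ {e}) := isBase_restrict_iff'.1 hB
    have hBR : B ⊆ M.E \ {e} := hB'.subset
    have heB : e ∉ B := fun h => (hBR h).2 rfl
    have hclR : M✶.closure B = M✶.closure (M✶.E \ {e}) := hB'.closure_eq_closure
    have hRcl : M✶.E \ {e} ⊆ M✶.closure B := by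
      rw [hclR]; exact M✶.subset_closure _ diff_subset
    have hBbase : M✶.IsBase B := by
      by_cases hecl : e ∈ M✶.closure B
      · refine hB'.indep.isBase_of_ground_subset_closure fun x hx => ?_
        by_cases hxe : x = e
        · exact hxe ▸ hecl
        · exact hRcl ⟨hx, hxe⟩
      · exfalso
        have hins : M✶.Indep (insert e B) := by
          rw [hB'.indep.insert_indep_iff_of_notMem heB]
          exact ⟨heE, hecl⟩
        have hinsbase : M✶.IsBase (insert e B) := by
          refine hins.isBase_of_ground_subset_closure fun x hx => ?_
          by_cases hxe : x = e
          · exact M✶.mem_closure_of_mem' (hxe ▸ mem_insert e B) (hxe ▸ heE)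
          · exact M✶.closure_subset_closure (subset_insert e B) (hRcl ⟨hx, hxe⟩)
        obtain ⟨B0, hB0, heB0⟩ := he.exists_isBase_superset
        have hBc : M✶.IsBase (M.E \ B0) := hB0.compl_isBase_dual
        have hBcR : M.E \ B0 ⊆ M.E \ {e} := fun x hx =>
          ⟨hx.1, fun h => hx.2 (heB0 (h ▸ rfl))⟩
        obtain ⟨B2, hB2, hsubB2⟩ := hBc.indep.subset_isBasis'_of_subset hBcR
        have hcard1 : (insert e B).encard = (M.E \ B0).encard :=
          hinsbase.encard_eq_encard_of_isBase hBc
        have hcard2 : (M.E \ B0).encard ≤ B.encard := by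
          calc (M.E \ B0).encard ≤ B2.encard := encard_mono hsubB2
            _ = B.encard := (isBase_restrict_iff'.2 hB2).encard_eq_encard_of_isBase
                (isBase_restrict_iff'.2 hB')
        rw [Set.encard_insert_of_notMem heB] at hcard1
        have hBfin : B.Finite := hfin.subset (hBR.trans diff_subset)
        have : B.encard + 1 ≤ B.encard := le_trans (le_of_eq hcard1) hcard2
        have h2 := hBfin.encard_lt_top
        rw [ENat.add_one_le_iff h2.ne] at this
        exact absurd this (lt_irrefl _)
    have hB0' : M.IsBase (M.E \ B) := hBbase.compl_isBase_of_dual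
    refine ⟨fun h => (hIR' h).2 rfl, hB0'.indep.subset ?_⟩
    rintro x (hx | hx)
    · exact ⟨(hIR' hx).1, (Set.disjoint_left.1 hdisj) hx⟩
    · rw [mem_singleton_iff] at hx
      exact ⟨hx ▸ heE, fun h => (hBR h).2 (by rw [hx]; exact rfl)⟩
  · rintro ⟨heI, hIe⟩
    obtain ⟨B0, hB0, hsub0⟩ := hIe.exists_isBase_superset
    have hBc : M✶.IsBase (M.E \ B0) := hB0.compl_isBase_dual
    have heB0 : e ∈ B0 := hsub0 (Or.inr rfl)
    have hBcR : M.E \ B0 ⊆ M.E \ {e} := fun x hx =>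
      ⟨hx.1, fun h => hx.2 ((mem_singleton_iff.1 h) ▸ heB0)⟩
    have hbasis : M✶.IsBasis' (M.E \ B0) (M✶.E \ {e}) := by
      refine ⟨⟨hBc.indep, hBcR⟩, fun J hJ hBJ => ?_⟩
      exact (hBc.eq_of_subset_indep hJ.1 hBJ).symm.le
    refine (dual_indep_iff_exists' (M := M✶ ↾ (M✶.E \ {e}))).2
      ⟨?_, M.E \ B0, isBase_restrict_iff'.2 hbasis, ?_⟩
    · exact fun x hx => ⟨hIe.subset_ground (Or.inl hx), fun h => heI (h ▸ hx)⟩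
    · exact Set.disjoint_left.2 fun x hx h => h.2 (hsub0 (Or.inl hx))

lemma contractM_indep_of_indep (hfin : M.E.Finite) (he : M.Indep {e})
    (h : (contractM M {e}).Indep I) : M.Indep I :=
  (((contractM_indep_iff hfin he).1 h).2).subset subset_union_left

lemma contractM_closure_subset (hfin : M.E.Finite) (he : M.Indep {e}) (X : Set β) :
    (contractM M {e}).closure X ⊆ M.closure (X ∪ {e}) := by
  have heE : e ∈ M.E := he.subset_ground rfl
  obtain ⟨I, hI⟩ := (contractM M {e}).exists_isBasis' X
  rw [← hI.closure_eq_closure]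
  intro g hg
  have hgN : g ∈ (contractM M {e}).E := (contractM M {e}).closure_subset_ground _ hg
  have hgE : g ∈ M.E := hgN.1
  have hge : g ≠ e := fun h => hgN.2 (mem_singleton_iff.2 h)
  obtain ⟨heI, hIe⟩ := (contractM_indep_iff hfin he).1 hI.indep
  by_cases hgI : g ∈ I
  · exact M.mem_closure_of_mem' (Or.inl (hI.subset hgI)) hgE
  · have hdep : (contractM M {e}).Dep (insert g I) :=
      (hI.indep.mem_closure_iff_of_notMem hgI).1 hg
    have hnd : ¬ M.Indep (insert g (I ∪ {e})) := by
      intro h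
      refine hdep.1 ((contractM_indep_iff hfin he).2 ⟨?_, ?_⟩)
      · rintro (h' | h')
        · exact hge h'.symm
        · exact heI h'
      · rwa [show insert g I ∪ {e} = insert g (I ∪ {e}) by
          rw [Set.insert_union]]
    have hgIe : g ∉ I ∪ {e} := by rintro (h | h); exacts [hgI h, hge h]
    have hg2 : g ∈ M.closure (I ∪ {e}) := by
      rw [hIe.mem_closure_iff_of_notMem hgIe]
      exact (dep_iff).2 ⟨hnd, insert_subset hgE hIe.subset_ground⟩
    exact M.closure_subset_closure (union_subset_union_left _ hI.subset) hg2

lemma rank_contractM_add_one_le (hfin : M.E.Finite) (he : M.Indep {e})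
    (heX : e ∉ X) (hX : X ⊆ M.E) :
    rank (contractM M {e}) X + 1 ≤ rank M (X ∪ {e}) := by
  have hXfin : X.Finite := hfin.subset hX
  obtain ⟨I, hI⟩ := (contractM M {e}).exists_isBasis' X
  rw [rank_eq_ncard_of_basis' hXfin hI]
  obtain ⟨heI, hIe⟩ := (contractM_indep_iff hfin he).1 hI.indep
  have hle : (I ∪ {e}).ncard ≤ rank M (X ∪ {e}) :=
    ncard_le_rank_of_indep (hXfin.union (Set.finite_singleton e)) hIe
      (union_subset_union_left _ hI.subset)
  rwa [Set.union_singleton, Set.ncard_insert_of_notMem heI (hXfin.subset hI.subset)]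
    at hle

end ContractAPI

section FrameworkLemmas

variable {α : Type u} {β : Type v} {G : Graph α β} {M : Matroid β} {e : β}

lemma Graph.ext' {G1 G2 : Graph α β} (hV : G1.V = G2.V) (hE : G1.E = G2.E)
    (hends : G1.ends = G2.ends) : G1 = G2 := by
  cases G1; cases G2; simp_all

lemma nonloop_of_nonloop_edge
    (h1 : G.E = M.E)
    (h3 : ∀ v ∈ G.V, M.closure (G.deleteVertex v).E ⊆ (G.deleteVertex v).E ∪ G.loopsAt v)
    (he : e ∈ G.E) {x z : α} (hends : G.ends e = s(x, z)) (hzx : z ≠ x) :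
    M.Indep {e} := by
  by_contra hni
  have hxV : x ∈ G.V := G.ends_mem he (hends ▸ Sym2.mem_mk_left x z)
  have hecl : e ∈ M.closure ∅ := by
    rw [(M.empty_indep).mem_closure_iff_of_notMem (notMem_empty e)]
    have hd : M.Dep {e} := dep_iff.2 ⟨hni, singleton_subset_iff.2 (h1 ▸ he)⟩
    simpa using hd
  have hm := (h3 x hxV) ((M.closure_subset_closure (empty_subset _)) hecl)
  rcases hm with h | h
  · exact h.2 x (hends ▸ Sym2.mem_mk_left x z) rfl
  · have h2 : G.ends e = Sym2.diag x := h.2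
    rw [hends] at h2
    exact hzx (Graph.pair_eq_diag_iff.1 h2).2

lemma circuit_deleteM_spec {C : Set β} (hC : IsCircuit (deleteM M {e}) C) :
    IsCircuit M C ∧ e ∉ C := by
  have hCsub : C ⊆ M.E \ {e} := hC.1.subset_ground
  refine ⟨⟨dep_iff.2 ⟨fun h => hC.1.1 (restrict_indep_iff.2 ⟨h, hCsub⟩),
    fun x hx => (hCsub hx).1⟩, fun D hD => ?_⟩, fun h => (hCsub h).2 rfl⟩
  exact ((restrict_indep_iff).1 (hC.2 D hD)).1

lemma circuit_contractM_spec (hfin : M.E.Finite) (he : M.Indep {e}) {C : Set β}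
    (hC : IsCircuit (contractM M {e}) C) :
    e ∉ C ∧ C ⊆ M.E ∧ C.Nonempty ∧ (∀ D, D ⊂ C → M.Indep (D ∪ {e}))
      ∧ ¬ M.Indep (C ∪ {e}) := by
  have hCsub : C ⊆ (contractM M {e}).E := hC.1.subset_ground
  have heC : e ∉ C := fun h => (hCsub h).2 rfl
  have hCE : C ⊆ M.E := fun x hx => (hCsub hx).1
  refine ⟨heC, hCE, hC.1.nonempty, fun D hD => ?_, fun h => ?_⟩
  · exact ((contractM_indep_iff hfin he).1 (hC.2 D hD)).2
  · exact hC.1.1 ((contractM_indep_iff hfin he).2 ⟨heC, h⟩)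

lemma rank_circuit_contractM (hfin : M.E.Finite) (he : M.Indep {e}) {C : Set β}
    (hC : IsCircuit (contractM M {e}) C) :
    rank M (C ∪ {e}) = C.ncard := by
  obtain ⟨heC, hCE, hCne, hind, hdep⟩ := circuit_contractM_spec hfin he hC
  have hCfin : C.Finite := hfin.subset hCE
  have hCefin : (C ∪ {e}).Finite := hCfin.union (finite_singleton e)
  obtain ⟨g0, hg0⟩ := hCne
  have hcc := Set.ncard_diff_singleton_add_one hg0 hCfin
  have hup : rank M (C ∪ {e}) < C.ncard + 1 := by
    have h := rank_lt_of_dep hCefin hdep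
    rwa [show (C ∪ {e}).ncard = C.ncard + 1 by
      rw [Set.union_singleton, Set.ncard_insert_of_notMem heC hCfin]] at h
  have hlow : C.ncard ≤ rank M (C ∪ {e}) := by
    have hd : M.Indep ((C \ {g0}) ∪ {e}) :=
      hind _ (Set.sdiff_singleton_ssubset.2 hg0)
    have h := ncard_le_rank_of_indep hCefin hd
      (union_subset_union_left _ diff_subset)
    rwa [show ((C \ {g0}) ∪ {e}).ncard = C.ncard by
      rw [Set.union_singleton,
        Set.ncard_insert_of_notMem (fun hh => heC (diff_subset hh)) (hCfin.diff), hcc]] at h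
  omega

lemma circuit_lift_of_indep (hfin : M.E.Finite) (he : M.Indep {e}) {C : Set β}
    (hC : IsCircuit (contractM M {e}) C) (hCI : M.Indep C) : IsCircuit M (C ∪ {e}) := by
  obtain ⟨heC, hCE, hCne, hind, hdep⟩ := circuit_contractM_spec hfin he hC
  constructor
  · exact dep_iff.2 ⟨hdep, union_subset hCE (singleton_subset_iff.2 (he.subset_ground rfl))⟩
  · intro D hD
    by_cases heD : e ∈ D
    · have hDe : D \ {e} ⊂ C := by
        rw [ssubset_iff_subset_ne]
        constructor
        · rintro x ⟨hx, hxe⟩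
          rcases hD.1 hx with h | h
          · exact h
          · exact absurd h hxe
        · intro h
          apply hD.2
          rw [← h]
          intro x hx
          rcases hx with hx | hx
          · exact hx.1
          · exact (mem_singleton_iff.1 hx) ▸ heD
      have h := hind _ hDe
      have heq : (D \ {e}) ∪ {e} = D := by
        rw [Set.diff_union_self, Set.union_eq_self_of_subset_right
          (singleton_subset_iff.2 heD)]
      rwa [heq] at h
    · refine hCI.subset fun x hx => ?_
      rcases hD.1 hx with h | h
      · exact h
      · exact absurd ((mem_singleton_iff.1 h) ▸ hx) heD

lemma circuit_lift_of_dep (hfin : M.E.Finite) (he : M.Indep {e}) {C : Set β}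
    (hC : IsCircuit (contractM M {e}) C) (hCI : ¬ M.Indep C) : IsCircuit M C := by
  obtain ⟨heC, hCE, hCne, hind, hdep⟩ := circuit_contractM_spec hfin he hC
  exact ⟨dep_iff.2 ⟨hCI, hCE⟩, fun D hD => (hind D hD).subset subset_union_left⟩

end FrameworkLemmas

section Parts

variable {α : Type u} {β : Type v}

lemma restrictM_closure_subset {M : Matroid β} {R X : Set β} (hXR : X ⊆ R) (hR : R ⊆ M.E) :
    (M ↾ R).closure X ⊆ M.closure X := by
  obtain ⟨I, hI⟩ := (M ↾ R).exists_isBasis' X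
  rw [← hI.closure_eq_closure]
  intro g hg
  have hgR : g ∈ R := (M ↾ R).closure_subset_ground _ hg
  have hgE : g ∈ M.E := hR hgR
  have hIM : M.Indep I := (restrict_indep_iff.1 hI.indep).1
  by_cases hgI : g ∈ I
  · exact M.mem_closure_of_mem' (hI.subset hgI) hgE
  · have hdep := (hI.indep.mem_closure_iff_of_notMem hgI).1 hg
    have hnd : ¬ M.Indep (insert g I) := fun h =>
      hdep.1 (restrict_indep_iff.2 ⟨h, insert_subset hgR (hI.subset.trans hXR)⟩)
    have hgcl : g ∈ M.closure I := by
      rw [hIM.mem_closure_iff_of_notMem hgI]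
      exact dep_iff.2 ⟨hnd, insert_subset hgE hIM.subset_ground⟩
    exact M.closure_subset_closure hI.subset hgcl

lemma part_a (G : Graph α β) (M : Matroid β) (h : Framework G M) (e : β) :
    Framework (G.deleteEdge e) (deleteM M {e}) := by
  obtain ⟨⟨h1, h2, h3⟩, h4⟩ := h
  have hfinE : M.E.Finite := h1 ▸ G.finE
  refine ⟨⟨?_, ?_, ?_⟩, ?_⟩
  · -- (1)
    show G.E \ {e} = (M ↾ (M.E \ {e})).E
    rw [h1]; rfl
  · -- (2)
    rintro H ⟨r, hr, rfl⟩
    have hrV : r ∈ G.V := hr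
    have hliftR : ∀ {a b}, Relation.ReflTransGen (G.deleteEdge e).Adj a b →
        Relation.ReflTransGen G.Adj a b := by
      intro a b hab
      refine rtg_lift (f := id) (fun a b hab => Relation.ReflTransGen.single ?_) hab
      obtain ⟨f, hf, hends⟩ := hab
      exact ⟨f, hf.1, hends⟩
    have hHV : ((G.deleteEdge e).componentOf r).V ⊆ (G.componentOf r).V := by
      rintro u ⟨huV, hu⟩
      exact ⟨huV, hliftR hu⟩
    have hsub : ((G.deleteEdge e).componentOf r).E ⊆
        {f ∈ (G.componentOf r).E | ∀ x ∈ G.ends f, x ∈ ((G.deleteEdge e).componentOf r).V} := by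
      rintro f ⟨hf, hre⟩
      exact ⟨⟨hf.1, fun x hx => hliftR (hre x hx)⟩,
        fun x hx => ⟨G.ends_mem hf.1 hx, hre x hx⟩⟩
    have hne : ((G.deleteEdge e).componentOf r).V.Nonempty := ⟨r, hr, .refl⟩
    have hEfin : ((G.deleteEdge e).componentOf r).E.Finite :=
      G.finE.subset fun f hf => hf.1.1
    have hbig : {f ∈ (G.componentOf r).E | ∀ x ∈ G.ends f,
        x ∈ ((G.deleteEdge e).componentOf r).V}.Finite :=
      G.finE.subset fun f hf => hf.1.1
    calc rank (deleteM M {e}) ((G.deleteEdge e).componentOf r).E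
        ≤ rank M ((G.deleteEdge e).componentOf r).E :=
          rank_le_of_indep_imp hEfin (fun I hI => (restrict_indep_iff.1 hI).1)
      _ ≤ rank M {f ∈ (G.componentOf r).E | ∀ x ∈ G.ends f,
            x ∈ ((G.deleteEdge e).componentOf r).V} := rank_mono' hbig hsub
      _ ≤ ((G.deleteEdge e).componentOf r).V.ncard := compbound h1 h2 h3 hrV hHV hne
  · -- (3)
    intro v hv
    have hvV : v ∈ G.V := hv
    intro g hg
    have hYsub : (((G.deleteEdge e).deleteVertex v)).E ⊆ M.E \ {e} := by
      rintro f ⟨hf, -⟩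
      exact ⟨h1 ▸ hf.1, hf.2⟩
    have hg1 : g ∈ M.closure (((G.deleteEdge e).deleteVertex v)).E :=
      restrictM_closure_subset hYsub diff_subset hg
    have hgR : g ∈ M.E \ {e} :=
      (deleteM M {e}).closure_subset_ground _ hg
    have hsub2 : (((G.deleteEdge e).deleteVertex v)).E ⊆ (G.deleteVertex v).E := by
      rintro f ⟨hf, hfv⟩
      exact ⟨hf.1, hfv⟩
    have hg2 := (h3 v hvV) ((M.closure_subset_closure hsub2) hg1)
    rcases hg2 with hm | hm
    · left
      exact ⟨⟨hm.1, fun hh => hgR.2 hh⟩, hm.2⟩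
    · right
      exact ⟨⟨hm.1, fun hh => hgR.2 hh⟩, hm.2⟩
  · -- (4)
    intro C hC
    obtain ⟨hMC, heC⟩ := circuit_deleteM_spec hC
    have heq : (G.deleteEdge e).restrictEdges C = G.restrictEdges C := by
      have hE : C ∩ (G.deleteEdge e).E = C ∩ G.E := by
        ext f
        exact ⟨fun hf => ⟨hf.1, hf.2.1⟩,
          fun hf => ⟨hf.1, hf.2, fun hh => heC (hh ▸ hf.1)⟩⟩
      refine Graph.ext' ?_ ?_ rfl
      · show {w | ∃ f ∈ C ∩ (G.deleteEdge e).E, w ∈ G.ends f}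
          = {w | ∃ f ∈ C ∩ G.E, w ∈ G.ends f}
        rw [hE]
      · exact hE
    rw [heq]
    exact h4 C hMC

end Parts

section PartB

variable {α : Type u} {β : Type v}

lemma sym2_exists_pair (z : Sym2 α) : ∃ p q, z = s(p, q) :=
  Sym2.inductionOn z fun p q => ⟨p, q, rfl⟩

lemma sym2_map_eq_pair {σ : α → α} {z : Sym2 α} {a b : α}
    (h : Sym2.map σ z = s(a, b)) : ∃ p q, z = s(p, q) ∧ σ p = a ∧ σ q = b := by
  obtain ⟨p, q, rfl⟩ := sym2_exists_pair z
  rw [Sym2.map_pair_eq, Sym2.eq_iff] at h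
  rcases h with ⟨h1, h2⟩ | ⟨h1, h2⟩
  · exact ⟨p, q, rfl, h1, h2⟩
  · exact ⟨q, p, Sym2.eq_swap, h2, h1⟩

lemma part_b (G : Graph α β) (M : Matroid β) (h : Framework G M) (e : β)
    (x y : α) (heG : e ∈ G.E) (hxy : G.ends e = s(x, y)) (hne : x ≠ y) :
    Framework (G.contractEdge e x y heG hxy hne) (contractM M {e}) := by
  classical
  obtain ⟨⟨h1, h2, h3⟩, h4⟩ := h
  have hfinE : M.E.Finite := h1 ▸ G.finE
  have hIe : M.Indep {e} := nonloop_of_nonloop_edge h1 h3 heG hxy (Ne.symm hne)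
  have heM : e ∈ M.E := h1 ▸ heG
  set σ : α → α := fun w => if w = y then x else w with hσ
  have hσy : σ y = x := if_pos rfl
  have hσne : ∀ w, w ≠ y → σ w = w := fun w hw => if_neg hw
  have hσx : σ x = x := hσne x hne
  set Gc := G.contractEdge e x y heG hxy hne with hGc
  have hGcE : Gc.E = G.E \ {e} := rfl
  have hGcends : ∀ f, Gc.ends f = (G.ends f).map σ := fun f => rfl
  have hxV : x ∈ G.V := G.ends_mem heG (hxy ▸ Sym2.mem_mk_left x y)
  have hyV : y ∈ G.V := G.ends_mem heG (hxy ▸ Sym2.mem_mk_right x y)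
  have hAdjxy : G.Adj x y := ⟨e, heG, hxy⟩
  have hstep : ∀ p, Relation.ReflTransGen G.Adj (σ p) p := by
    intro p
    by_cases hp : p = y
    · subst hp; rw [hσy]; exact Relation.ReflTransGen.single hAdjxy
    · rw [hσne p hp]
  have hlift : ∀ a b, Gc.Adj a b → Relation.ReflTransGen G.Adj a b := by
    rintro a b ⟨f, hf, hends⟩
    rw [hGcends] at hends
    obtain ⟨p, q, hpq, hpa, hqb⟩ := sym2_map_eq_pair hends
    have h1' : Relation.ReflTransGen G.Adj a p := hpa ▸ hstep p
    have h2' : Relation.ReflTransGen G.Adj q b :=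
      hqb ▸ rtg_symm (fun _ _ hh => G.adj_symm hh) (hstep q)
    exact (h1'.trans (Relation.ReflTransGen.single ⟨f, hf.1, hpq⟩)).trans h2'
  have hliftR : ∀ {a b}, Relation.ReflTransGen Gc.Adj a b →
      Relation.ReflTransGen G.Adj a b := fun hab => rtg_lift (f := id) hlift hab
  refine ⟨⟨?_, ?_, ?_⟩, ?_⟩
  · -- (1)
    show G.E \ {e} = M.E \ {e}
    rw [h1]
  · -- (2)
    rintro H ⟨r, hr, rfl⟩
    have hrG : r ∈ G.V := hr.1
    set H := Gc.componentOf r with hH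
    have hHVK : H.V ⊆ (G.componentOf r).V := by
      rintro u ⟨huV, hu⟩
      exact ⟨huV.1, hliftR hu⟩
    have hHVend : ∀ f ∈ H.E, ∀ w ∈ Gc.ends f, w ∈ H.V := by
      rintro f ⟨hfE, hre⟩ w hw
      exact ⟨Gc.ends_mem hfE hw, hre w hw⟩
    have hHEG : H.E ⊆ G.E := fun f hf => hf.1.1
    have hHE_ME : H.E ⊆ M.E := fun f hf => h1 ▸ hHEG hf
    have heH : e ∉ H.E := fun hh => hh.1.2 rfl
    by_cases hxH : x ∈ H.V
    · -- the component containing the contracted vertex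
      have hrx : Relation.ReflTransGen G.Adj r x := (hHVK hxH).2
      have hyK : y ∈ (G.componentOf r).V := ⟨hyV, hrx.tail hAdjxy⟩
      have hyH : y ∉ H.V := fun hh => hh.1.2 rfl
      have hTK : H.V ∪ {y} ⊆ (G.componentOf r).V := by
        rintro w (hw | hw)
        · exact hHVK hw
        · exact (mem_singleton_iff.1 hw) ▸ hyK
      have hsub : H.E ∪ {e} ⊆
          {f ∈ (G.componentOf r).E | ∀ w ∈ G.ends f, w ∈ H.V ∪ {y}} := by
        rintro f (hf | hf)
        · have hwT : ∀ w ∈ G.ends f, w ∈ H.V ∪ {y} := by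
            intro w hw
            by_cases hwy : w = y
            · exact Or.inr (mem_singleton_iff.2 hwy)
            · have : σ w ∈ Gc.ends f := by
                rw [hGcends, Sym2.mem_map]; exact ⟨w, hw, rfl⟩
              rw [hσne w hwy] at this
              exact Or.inl (hHVend f hf w this)
          refine ⟨⟨hHEG hf, fun w hw => ?_⟩, hwT⟩
          rcases hwT w hw with h' | h'
          · exact (hHVK h').2
          · exact (mem_singleton_iff.1 h') ▸ hyK.2
        · rw [mem_singleton_iff] at hf
          subst hf
          refine ⟨⟨heG, fun w hw => ?_⟩, fun w hw => ?_⟩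
          · rw [hxy, Sym2.mem_iff] at hw
            rcases hw with rfl | rfl
            · exact hrx
            · exact hyK.2
          · rw [hxy, Sym2.mem_iff] at hw
            rcases hw with rfl | rfl
            · exact Or.inl hxH
            · exact Or.inr rfl
      have hbigfin : {f ∈ (G.componentOf r).E | ∀ w ∈ G.ends f,
          w ∈ H.V ∪ {y}}.Finite := G.finE.subset fun f hf => hf.1.1
      have hVfin : H.V.Finite := G.finV.subset fun u hu => hu.1.1
      have hTcard : (H.V ∪ {y}).ncard = H.V.ncard + 1 := by
        rw [Set.union_singleton, Set.ncard_insert_of_notMem hyH hVfin]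
      have hchain := calc
        rank (contractM M {e}) H.E + 1 ≤ rank M (H.E ∪ {e}) :=
          rank_contractM_add_one_le hfinE hIe heH hHE_ME
        _ ≤ rank M {f ∈ (G.componentOf r).E | ∀ w ∈ G.ends f, w ∈ H.V ∪ {y}} :=
          rank_mono' hbigfin hsub
        _ ≤ (H.V ∪ {y}).ncard := compbound h1 h2 h3 hrG hTK ⟨x, Or.inl hxH⟩
      omega
    · -- component avoiding x
      have hends_eq : ∀ f ∈ H.E, ∀ w ∈ G.ends f, w ∈ H.V := by
        intro f hf w hw
        have hσw : σ w ∈ Gc.ends f := by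
          rw [hGcends, Sym2.mem_map]; exact ⟨w, hw, rfl⟩
        by_cases hwy : w = y
        · exfalso
          rw [hwy, hσy] at hσw
          exact hxH (hHVend f hf x hσw)
        · rw [hσne w hwy] at hσw
          exact hHVend f hf w hσw
      have hsub : H.E ⊆ {f ∈ (G.componentOf r).E | ∀ w ∈ G.ends f, w ∈ H.V} := by
        intro f hf
        exact ⟨⟨hHEG hf, fun w hw => (hHVK (hends_eq f hf w hw)).2⟩, hends_eq f hf⟩
      have hbigfin : {f ∈ (G.componentOf r).E | ∀ w ∈ G.ends f,
          w ∈ H.V}.Finite := G.finE.subset fun f hf => hf.1.1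
      calc rank (contractM M {e}) H.E ≤ rank M H.E :=
            rank_le_of_indep_imp (hfinE.subset hHE_ME)
              (fun I hI => contractM_indep_of_indep hfinE hIe hI)
        _ ≤ rank M {f ∈ (G.componentOf r).E | ∀ w ∈ G.ends f, w ∈ H.V} :=
            rank_mono' hbigfin hsub
        _ ≤ H.V.ncard := compbound h1 h2 h3 hrG hHVK ⟨r, hr, .refl⟩
  · -- (3)
    intro v hv
    have hvG : v ∈ G.V := hv.1
    have hvy : v ≠ y := hv.2
    intro g hg
    set Y := ((Gc.deleteVertex v)).E with hYdef
    have hgcl : g ∈ M.closure (Y ∪ {e}) := contractM_closure_subset hfinE hIe Y hg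
    have hgN : g ∈ (contractM M {e}).E := (contractM M {e}).closure_subset_ground _ hg
    have hgE : g ∈ G.E := h1 ▸ hgN.1
    have hge : g ≠ e := fun hh => hgN.2 (mem_singleton_iff.2 hh)
    have hYmem : ∀ f, f ∈ Y ↔ (f ∈ G.E ∧ f ≠ e) ∧ ∀ w ∈ G.ends f, σ w ≠ v := by
      intro f
      constructor
      · rintro ⟨hfE, hfv⟩
        refine ⟨⟨hfE.1, hfE.2⟩, fun w hw => ?_⟩
        refine fun hσw => hfv (σ w) ?_ (mem_singleton_iff.2 hσw)
        rw [hGcends, Sym2.mem_map]; exact ⟨w, hw, rfl⟩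
      · rintro ⟨⟨hfE, hfe⟩, hval⟩
        refine ⟨⟨hfE, hfe⟩, fun w' hw' hw'v => ?_⟩
        rw [hGcends, Sym2.mem_map] at hw'
        obtain ⟨w, hw, rfl⟩ := hw'
        exact hval w hw (mem_singleton_iff.1 hw'v)
    by_cases hvx : v = x
    · subst hvx
      -- v is the merged vertex
      have hYsub : ∀ f ∈ Y, f ∈ G.E ∧ f ≠ e ∧ v ∉ G.ends f ∧ y ∉ G.ends f := by
        intro f hf
        obtain ⟨⟨hfE, hfe⟩, hval⟩ := (hYmem f).1 hf
        refine ⟨hfE, hfe, fun hmem => ?_, fun hmem => ?_⟩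
        · exact hval v hmem hσx
        · exact hval y hmem hσy
      by_cases hends_sub : ∀ w ∈ G.ends g, w = v ∨ w = y
      · -- g becomes a loop at v
        right
        refine ⟨⟨hgE, hge⟩, ?_⟩
        obtain ⟨p, q, hpq⟩ := sym2_exists_pair (G.ends g)
        rw [hGcends, hpq, Sym2.map_pair_eq]
        have hp : σ p = v := by
          rcases hends_sub p (hpq ▸ Sym2.mem_mk_left p q) with rfl | rfl
          exacts [hσx, hσy]
        have hq : σ q = v := by
          rcases hends_sub q (hpq ▸ Sym2.mem_mk_right p q) with rfl | rfl
          exacts [hσx, hσy]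
        rw [hp, hq]
        rfl
      · push_neg at hends_sub
        obtain ⟨w, hw, hwx, hwy⟩ := hends_sub
        by_cases hgY : g ∈ M.closure Y
        · -- g is spanned without e : it avoids v and y
          left
          have hYx : Y ⊆ (G.deleteVertex v).E := by
            intro f hf
            obtain ⟨hfE, -, hfx, -⟩ := hYsub f hf
            exact ⟨hfE, fun w' hw' hwv => hfx ((mem_singleton_iff.1 hwv) ▸ hw')⟩
          have hYy : Y ⊆ (G.deleteVertex y).E := by
            intro f hf
            obtain ⟨hfE, -, -, hfy⟩ := hYsub f hf
            exact ⟨hfE, fun w' hw' hwv => hfy ((mem_singleton_iff.1 hwv) ▸ hw')⟩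
          have hgx := (h3 v hxV) ((M.closure_subset_closure hYx) hgY)
          have hgy := (h3 y hyV) ((M.closure_subset_closure hYy) hgY)
          have hgx' : v ∉ G.ends g := by
            rcases hgx with h' | h'
            · intro hmem; exact h'.2 v hmem rfl
            · exfalso
              rw [show G.ends g = Sym2.diag v from h'.2] at hw
              exact hwx (Graph.mem_diag_iff.1 hw)
          have hgy' : y ∉ G.ends g := by
            rcases hgy with h' | h'
            · intro hmem; exact h'.2 y hmem rfl
            · exfalso
              rw [show G.ends g = Sym2.diag y from h'.2] at hw
              exact hwy (Graph.mem_diag_iff.1 hw)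
          refine (hYmem g).2 ⟨⟨hgE, hge⟩, fun w' hw' => ?_⟩
          by_cases hw'y : w' = y
          · exact absurd (hw'y ▸ hw') hgy'
          · rw [hσne w' hw'y]
            exact fun hh => hgx' (hh ▸ hw')
        · -- exchange : e would be spanned avoiding one endpoint
          exfalso
          rw [Set.union_singleton] at hgcl
          have hecl : e ∈ M.closure (insert g Y) := mem_closure_insert hgY hgcl
          have hxory : v ∉ G.ends g ∨ y ∉ G.ends g := by
            by_contra hcon
            push_neg at hcon
            obtain ⟨hxg, hyg⟩ := hcon
            obtain ⟨p, q, hpq⟩ := sym2_exists_pair (G.ends g)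
            rw [hpq, Sym2.mem_iff] at hxg hyg hw
            rcases hw with rfl | rfl
            · rcases hxg with h' | h'
              · exact hwx h'.symm
              · rcases hyg with h'' | h''
                · exact hwy h''.symm
                · exact hne (h'.trans h''.symm)
            · rcases hxg with h' | h'
              · rcases hyg with h'' | h''
                · exact hne (h'.trans h''.symm)
                · exact hwy h''.symm
              · exact hwx h'.symm
          have hYx : Y ⊆ (G.deleteVertex v).E := by
            intro f hf
            obtain ⟨hfE, -, hfx, -⟩ := hYsub f hf
            exact ⟨hfE, fun w' hw' hwv => hfx ((mem_singleton_iff.1 hwv) ▸ hw')⟩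
          have hYy : Y ⊆ (G.deleteVertex y).E := by
            intro f hf
            obtain ⟨hfE, -, -, hfy⟩ := hYsub f hf
            exact ⟨hfE, fun w' hw' hwv => hfy ((mem_singleton_iff.1 hwv) ▸ hw')⟩
          rcases hxory with hgx | hgy
          · have hsub : insert g Y ⊆ (G.deleteVertex v).E := by
              refine insert_subset ⟨hgE, fun w' hw' hwv => ?_⟩ hYx
              exact hgx ((mem_singleton_iff.1 hwv) ▸ hw')
            have hee := (h3 v hxV) ((M.closure_subset_closure hsub) hecl)
            rcases hee with h' | h'
            · exact h'.2 v (hxy ▸ Sym2.mem_mk_left v y) rfl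
            · have h'' : G.ends e = Sym2.diag v := h'.2
              rw [hxy] at h''
              exact hne ((Graph.pair_eq_diag_iff.1 h'').2).symm
          · have hsub : insert g Y ⊆ (G.deleteVertex y).E := by
              refine insert_subset ⟨hgE, fun w' hw' hwv => ?_⟩ hYy
              exact hgy ((mem_singleton_iff.1 hwv) ▸ hw')
            have hee := (h3 y hyV) ((M.closure_subset_closure hsub) hecl)
            rcases hee with h' | h'
            · exact h'.2 y (hxy ▸ Sym2.mem_mk_right v y) rfl
            · have h'' : G.ends e = Sym2.diag y := h'.2
              rw [hxy] at h''
              exact hne (Graph.pair_eq_diag_iff.1 h'').1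
    · -- v ≠ x (and v ≠ y) : straightforward
      have hYeq : Y ∪ {e} = (G.deleteVertex v).E := by
        apply Set.Subset.antisymm
        · rintro f (hf | hf)
          · obtain ⟨⟨hfE, hfe⟩, hval⟩ := (hYmem f).1 hf
            refine ⟨hfE, fun w hw hwv => ?_⟩
            rw [mem_singleton_iff] at hwv
            subst hwv
            exact hval _ hw (hσne _ hvy)
          · rw [mem_singleton_iff] at hf
            subst hf
            refine ⟨heG, fun w hw hwv => ?_⟩
            rw [mem_singleton_iff] at hwv
            subst hwv
            rw [hxy, Sym2.mem_iff] at hw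
            rcases hw with h' | h'
            exacts [hvx h', hvy h']
        · rintro f ⟨hfE, hval⟩
          by_cases hfe : f = e
          · exact Or.inr (mem_singleton_iff.2 hfe)
          · refine Or.inl ((hYmem f).2 ⟨⟨hfE, hfe⟩, fun w hw hσw => ?_⟩)
            by_cases hwy' : w = y
            · rw [hwy', hσy] at hσw
              exact hvx hσw.symm
            · rw [hσne w hwy'] at hσw
              exact hval w hw (mem_singleton_iff.2 hσw)
      rw [hYeq] at hgcl
      have := (h3 v hvG) hgcl
      rcases this with h' | h'
      · -- g ∈ (G - v).E : then g ∈ Y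
        left
        refine (hYmem g).2 ⟨⟨hgE, hge⟩, fun w hw hσw => ?_⟩
        by_cases hwy' : w = y
        · rw [hwy', hσy] at hσw
          exact hvx hσw.symm
        · rw [hσne w hwy'] at hσw
          exact h'.2 w hw (mem_singleton_iff.2 hσw)
      · -- g is a loop of G at v, hence a loop of Gc at v
        right
        refine ⟨⟨hgE, hge⟩, ?_⟩
        have h'' : G.ends g = Sym2.diag v := h'.2
        rw [hGcends, h'']
        show Sym2.map σ s(v, v) = Sym2.diag v
        rw [Sym2.map_pair_eq, hσne v hvy]
        rfl
  · -- (4)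
    intro C hC
    obtain ⟨heC, hCE, hCne, hind, hdep⟩ := circuit_contractM_spec hfinE hIe hC
    have key : ∀ C' : Set β, C ⊆ C' → C' ⊆ C ∪ {e} →
        (G.restrictEdges C').AtMostTwoComponents →
        (Gc.restrictEdges C).AtMostTwoComponents := by
      intro C' hsub1 hsub2 hA
      intro u1 hu1 u2 hu2 u3 hu3
      have hliftV : ∀ u ∈ (Gc.restrictEdges C).V,
          ∃ w ∈ (G.restrictEdges C').V, σ w = u := by
        rintro u ⟨f, ⟨hfC, hfE⟩, hu⟩
        rw [hGcends, Sym2.mem_map] at hu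
        obtain ⟨w, hw, rfl⟩ := hu
        exact ⟨w, ⟨f, ⟨hsub1 hfC, hfE.1⟩, hw⟩, rfl⟩
      have hmapR : ∀ a b, Relation.ReflTransGen (G.restrictEdges C').Adj a b →
          Relation.ReflTransGen (Gc.restrictEdges C).Adj (σ a) (σ b) := by
        intro a b hab
        refine rtg_lift (f := σ) ?_ hab
        rintro p q ⟨f, ⟨hfC', hfE⟩, hends⟩
        have hends' : G.ends f = s(p, q) := hends
        by_cases hfe : f = e
        · have hendse : G.ends e = s(p, q) := hfe ▸ hends'
          have hpq2 : σ p = σ q := by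
            rcases Sym2.eq_iff.1 (hxy.symm.trans hendse) with ⟨h1', h2'⟩ | ⟨h1', h2'⟩
            · rw [← h1', ← h2', hσx, hσy]
            · rw [← h1', ← h2', hσx, hσy]
          rw [hpq2]
        · have hfC : f ∈ C := by
            rcases hsub2 hfC' with h' | h'
            · exact h'
            · exact absurd (mem_singleton_iff.1 h') hfe
          refine Relation.ReflTransGen.single ⟨f, ⟨hfC, ⟨hfE, hfe⟩⟩, ?_⟩
          show Sym2.map σ (G.ends f) = s(σ p, σ q)
          rw [hends', Sym2.map_pair_eq]
      obtain ⟨w1, hw1, hw1e⟩ := hliftV u1 hu1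
      obtain ⟨w2, hw2, hw2e⟩ := hliftV u2 hu2
      obtain ⟨w3, hw3, hw3e⟩ := hliftV u3 hu3
      rcases hA w1 hw1 w2 hw2 w3 hw3 with h' | h' | h'
      · exact Or.inl (hw1e ▸ hw2e ▸ hmapR w1 w2 h')
      · exact Or.inr (Or.inl (hw1e ▸ hw3e ▸ hmapR w1 w3 h'))
      · exact Or.inr (Or.inr (hw2e ▸ hw3e ▸ hmapR w2 w3 h'))
    by_cases hCI : M.Indep C
    · exact key (C ∪ {e}) subset_union_left (le_refl _)
        (h4 _ (circuit_lift_of_indep hfinE hIe hC hCI))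
    · exact key C (le_refl _) subset_union_left
        (h4 _ (circuit_lift_of_dep hfinE hIe hC hCI))

end PartB

section PartC

variable {α : Type u} {β : Type v}

lemma part_c (G : Graph α β) (M : Matroid β) (h : Framework G M) (e : β) (v : α)
    (hloop : G.IsLoopAt e v) (hIe : M.Indep {e})
    (hno : ∀ f ∈ G.E, G.ends f = Sym2.diag v → f = e) :
    Framework (G.circ e v hno) (contractM M {e}) := by
  classical
  obtain ⟨⟨h1, h2, h3⟩, h4⟩ := h
  have hfinE : M.E.Finite := h1 ▸ G.finE
  have heG : e ∈ G.E := hloop.1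
  have heM : e ∈ M.E := h1 ▸ heG
  have hev : G.ends e = Sym2.diag v := hloop.2
  have hvev : v ∈ G.ends e := by rw [hev]; exact Sym2.mem_mk_left v v
  have hvV : v ∈ G.V := G.ends_mem heG hvev
  set Gc := G.circ e v hno with hGc
  have hGcV : Gc.V = G.V \ {v} := rfl
  have hGcE : Gc.E = G.E \ {e} := rfl
  have hGcends_mem : ∀ (f : β) (hf : f ∈ G.E) (hfe : f ≠ e) (hvf : v ∈ G.ends f),
      Gc.ends f = Sym2.diag (Sym2.Mem.other hvf) := by
    intro f hf hfe hvf
    show (if h : f ∈ G.E ∧ f ≠ e ∧ v ∈ G.ends f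
        then Sym2.diag (Sym2.Mem.other h.2.2) else G.ends f) = _
    rw [dif_pos ⟨hf, hfe, hvf⟩]
  have hGcends_not : ∀ f, v ∉ G.ends f → Gc.ends f = G.ends f := by
    intro f hvf
    show (if h : f ∈ G.E ∧ f ≠ e ∧ v ∈ G.ends f
        then Sym2.diag (Sym2.Mem.other h.2.2) else G.ends f) = _
    rw [dif_neg (fun hh => hvf hh.2.2)]
  have hother_ne : ∀ (f : β) (hf : f ∈ G.E) (hfe : f ≠ e) (hvf : v ∈ G.ends f),
      Sym2.Mem.other hvf ≠ v := by
    intro f hf hfe hvf hcon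
    refine hfe (hno f hf ?_)
    rw [← Sym2.other_spec hvf, hcon]
    rfl
  have hother_eq : ∀ (f : β) (hvf : v ∈ G.ends f) (u : α), u ∈ G.ends f → u ≠ v →
      u = Sym2.Mem.other hvf := by
    intro f hvf u hu hune
    rw [← Sym2.other_spec hvf, Sym2.mem_iff] at hu
    rcases hu with h' | h'
    exacts [absurd h' hune, h']
  have hlift : ∀ a b, Gc.Adj a b → Relation.ReflTransGen G.Adj a b := by
    rintro a b ⟨f, hf, hends⟩
    by_cases hvf : v ∈ G.ends f
    · rw [hGcends_mem f hf.1 hf.2 hvf] at hends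
      obtain ⟨ha, hb⟩ := Graph.pair_eq_diag_iff.1 hends.symm
      rw [ha, hb]
    · rw [hGcends_not f hvf] at hends
      exact Relation.ReflTransGen.single ⟨f, hf.1, hends⟩
  have hliftR : ∀ {a b}, Relation.ReflTransGen Gc.Adj a b →
      Relation.ReflTransGen G.Adj a b := fun hab => rtg_lift (f := id) hlift hab
  refine ⟨⟨?_, ?_, ?_⟩, ?_⟩
  · -- (1)
    show G.E \ {e} = M.E \ {e}
    rw [h1]
  · -- (2)
    rintro H ⟨r, hr, rfl⟩
    have hrG : r ∈ G.V := hr.1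
    set H := Gc.componentOf r with hH
    have hHVK : H.V ⊆ (G.componentOf r).V := by
      rintro u ⟨huV, hu⟩
      exact ⟨huV.1, hliftR hu⟩
    have hHVend : ∀ f ∈ H.E, ∀ w ∈ Gc.ends f, w ∈ H.V := by
      rintro f ⟨hfE, hre⟩ w hw
      exact ⟨Gc.ends_mem hfE hw, hre w hw⟩
    have hHEG : H.E ⊆ G.E := fun f hf => hf.1.1
    have hHE_ME : H.E ⊆ M.E := fun f hf => h1 ▸ hHEG hf
    have heH : e ∉ H.E := fun hh => hh.1.2 rfl
    have hvH : v ∉ H.V := fun hh => hh.1.2 rfl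
    by_cases hcase : ∃ f ∈ H.E, v ∈ G.ends f
    · obtain ⟨f0, hf0H, hvf0⟩ := hcase
      have hf0G : f0 ∈ G.E := hHEG hf0H
      have hf0e : f0 ≠ e := fun hh => heH (hh ▸ hf0H)
      have hw0H : Sym2.Mem.other hvf0 ∈ H.V := by
        refine hHVend f0 hf0H _ ?_
        rw [hGcends_mem f0 hf0G hf0e hvf0]
        exact Sym2.mem_mk_left _ _
      have hadj0 : G.Adj (Sym2.Mem.other hvf0) v :=
        ⟨f0, hf0G, (Sym2.eq_swap.trans (Sym2.other_spec hvf0)).symm⟩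
      have hvK : v ∈ (G.componentOf r).V :=
        ⟨hvV, ((hHVK hw0H).2).tail hadj0⟩
      have hendT : ∀ f ∈ H.E, ∀ u ∈ G.ends f, u ∈ H.V ∪ {v} := by
        intro f hf u hu
        by_cases huv : u = v
        · exact Or.inr (mem_singleton_iff.2 huv)
        · by_cases hvf : v ∈ G.ends f
          · have hue : u = Sym2.Mem.other hvf := hother_eq f hvf u hu huv
            refine Or.inl (hHVend f hf u ?_)
            rw [hGcends_mem f (hHEG hf) (fun hh => heH (hh ▸ hf)) hvf, hue]
            exact Sym2.mem_mk_left _ _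
          · refine Or.inl (hHVend f hf u ?_)
            rw [hGcends_not f hvf]
            exact hu
      have hTK : H.V ∪ {v} ⊆ (G.componentOf r).V := by
        rintro w (hw | hw)
        · exact hHVK hw
        · exact (mem_singleton_iff.1 hw) ▸ hvK
      have hsub : H.E ∪ {e} ⊆
          {f ∈ (G.componentOf r).E | ∀ u ∈ G.ends f, u ∈ H.V ∪ {v}} := by
        rintro f (hf | hf)
        · exact ⟨⟨hHEG hf, fun u hu => (hTK (hendT f hf u hu)).2⟩, hendT f hf⟩
        · rw [mem_singleton_iff] at hf
          subst hf
          refine ⟨⟨heG, fun u hu => ?_⟩, fun u hu => ?_⟩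
          · rw [hev] at hu
            rw [Graph.mem_diag_iff.1 hu]
            exact hvK.2
          · rw [hev] at hu
            exact Or.inr (mem_singleton_iff.2 (Graph.mem_diag_iff.1 hu))
      have hbigfin : {f ∈ (G.componentOf r).E | ∀ u ∈ G.ends f,
          u ∈ H.V ∪ {v}}.Finite := G.finE.subset fun f hf => hf.1.1
      have hVfin : H.V.Finite := G.finV.subset fun u hu => hu.1.1
      have hTcard : (H.V ∪ {v}).ncard = H.V.ncard + 1 := by
        rw [Set.union_singleton, Set.ncard_insert_of_notMem hvH hVfin]
      have hchain := calc
        rank (contractM M {e}) H.E + 1 ≤ rank M (H.E ∪ {e}) :=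
          rank_contractM_add_one_le hfinE hIe heH hHE_ME
        _ ≤ rank M {f ∈ (G.componentOf r).E | ∀ u ∈ G.ends f, u ∈ H.V ∪ {v}} :=
          rank_mono' hbigfin hsub
        _ ≤ (H.V ∪ {v}).ncard :=
          compbound h1 h2 h3 hrG hTK ⟨v, Or.inr rfl⟩
      omega
    · push_neg at hcase
      have hends_eq : ∀ f ∈ H.E, ∀ u ∈ G.ends f, u ∈ H.V := by
        intro f hf u hu
        refine hHVend f hf u ?_
        rw [hGcends_not f (hcase f hf)]
        exact hu
      have hsub : H.E ⊆ {f ∈ (G.componentOf r).E | ∀ u ∈ G.ends f, u ∈ H.V} := by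
        intro f hf
        exact ⟨⟨hHEG hf, fun u hu => (hHVK (hends_eq f hf u hu)).2⟩, hends_eq f hf⟩
      have hbigfin : {f ∈ (G.componentOf r).E | ∀ u ∈ G.ends f,
          u ∈ H.V}.Finite := G.finE.subset fun f hf => hf.1.1
      calc rank (contractM M {e}) H.E ≤ rank M H.E :=
            rank_le_of_indep_imp (hfinE.subset hHE_ME)
              (fun I hI => contractM_indep_of_indep hfinE hIe hI)
        _ ≤ rank M {f ∈ (G.componentOf r).E | ∀ u ∈ G.ends f, u ∈ H.V} :=
            rank_mono' hbigfin hsub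
        _ ≤ H.V.ncard := compbound h1 h2 h3 hrG hHVK ⟨r, hr, .refl⟩
  · -- (3)
    intro u hu
    have huG : u ∈ G.V := hu.1
    have huv : u ≠ v := hu.2
    intro g hg
    set Y := ((Gc.deleteVertex u)).E with hYdef
    have hgcl : g ∈ M.closure (Y ∪ {e}) := contractM_closure_subset hfinE hIe Y hg
    have hgN : g ∈ (contractM M {e}).E := (contractM M {e}).closure_subset_ground _ hg
    have hgE : g ∈ G.E := h1 ▸ hgN.1
    have hge : g ≠ e := fun hh => hgN.2 (mem_singleton_iff.2 hh)
    have hYeq : Y ∪ {e} = (G.deleteVertex u).E := by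
      apply Set.Subset.antisymm
      · rintro f (hf | hf)
        · obtain ⟨⟨hfG, hfe⟩, hval⟩ := hf
          refine ⟨hfG, fun w hw hwu => ?_⟩
          rw [mem_singleton_iff] at hwu
          subst hwu
          by_cases hvf : v ∈ G.ends f
          · by_cases hwv : w = v
            · exact huv hwv
            · refine hval w ?_ rfl
              rw [hGcends_mem f hfG hfe hvf, ← hother_eq f hvf w hw hwv]
              exact Sym2.mem_mk_left _ _
          · refine hval w ?_ rfl
            rw [hGcends_not f hvf]
            exact hw
        · rw [mem_singleton_iff] at hf
          subst hf
          refine ⟨heG, fun w hw hwu => ?_⟩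
          rw [hev] at hw
          rw [mem_singleton_iff] at hwu
          exact huv ((hwu ▸ Graph.mem_diag_iff.1 hw : u = v))
      · rintro f ⟨hfG, hval⟩
        by_cases hfe : f = e
        · exact Or.inr (mem_singleton_iff.2 hfe)
        · refine Or.inl ⟨⟨hfG, hfe⟩, fun w hw hwu => ?_⟩
          rw [mem_singleton_iff] at hwu
          subst hwu
          by_cases hvf : v ∈ G.ends f
          · rw [hGcends_mem f hfG hfe hvf] at hw
            have hwo : w = Sym2.Mem.other hvf := Graph.mem_diag_iff.1 hw
            refine hval w ?_ rfl
            rw [hwo]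
            exact Sym2.other_mem hvf
          · rw [hGcends_not f hvf] at hw
            exact hval w hw rfl
    rw [hYeq] at hgcl
    have hh3 := (h3 u huG) hgcl
    rcases hh3 with h' | h'
    · left
      have : g ∈ Y ∪ {e} := hYeq.symm ▸ h'
      rcases this with h'' | h''
      · exact h''
      · exact absurd (mem_singleton_iff.1 h'') hge
    · right
      refine ⟨⟨hgE, hge⟩, ?_⟩
      have hgu : G.ends g = Sym2.diag u := h'.2
      have hvg : v ∉ G.ends g := by
        rw [hgu]
        intro hh
        exact huv (Graph.mem_diag_iff.1 hh).symm
      show Gc.ends g = Sym2.diag u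
      rw [hGcends_not g hvg]
      exact hgu
  · -- (4)
    intro C hC
    obtain ⟨heC, hCE, hCne, hind, hdep⟩ := circuit_contractM_spec hfinE hIe hC
    have hCG : C ⊆ G.E := fun f hf => h1.symm ▸ hCE hf
    have hCGc : C ⊆ Gc.E := fun f hf => ⟨hCG hf, fun hh => heC (hh ▸ hf)⟩
    set R' := Gc.restrictEdges C with hR'
    have hR'E : ∀ f, f ∈ R'.E ↔ f ∈ C := by
      intro f
      constructor
      · exact fun hf => hf.1
      · exact fun hf => ⟨hf, hCGc hf⟩
    have hR'ends : ∀ f, R'.ends f = Gc.ends f := fun f => rfl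
    have hR'V_sub : R'.V ⊆ G.V \ {v} := by
      rintro z ⟨f, hf, hz⟩
      exact Gc.ends_mem hf.2 hz
    intro u1 hu1 u2 hu2 u3 hu3
    by_contra hcon
    push_neg at hcon
    obtain ⟨h12, hcon2⟩ := hcon
    obtain ⟨h13, h23⟩ := hcon2
    have hsymR : ∀ a b : α, R'.Adj a b → R'.Adj b a := fun a b hh => R'.adj_symm hh
    by_cases hP : ∃ f ∈ C, v ∈ G.ends f
    · -- some edge of C meets v in G
      obtain ⟨f0, hf0C, hvf0⟩ := hP
      have hf0G : f0 ∈ G.E := hCG hf0C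
      have hf0e : f0 ≠ e := fun hh => heC (hh ▸ hf0C)
      have hends0 : Gc.ends f0 = Sym2.diag (Sym2.Mem.other hvf0) :=
        hGcends_mem f0 hf0G hf0e hvf0
      have hf0R : f0 ∈ R'.E := (hR'E f0).2 hf0C
      have hw0R : Sym2.Mem.other hvf0 ∈ R'.V :=
        ⟨f0, hf0R, by rw [hends0]; exact Sym2.mem_mk_left _ _⟩
      set w0 := Sym2.Mem.other hvf0 with hw0def
      set V1 : Set α := {z ∈ R'.V | Relation.ReflTransGen R'.Adj w0 z} with hV1
      set C1 : Set β := {f ∈ C | ∃ w ∈ Gc.ends f, w ∈ V1} with hC1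
      have hw0V1 : w0 ∈ V1 := ⟨hw0R, .refl⟩
      have hCL1 : ∀ f ∈ C1, ∀ w ∈ Gc.ends f, w ∈ V1 := by
        rintro f ⟨hfC, w', hw', hw'V1⟩ w hw
        have hfR : f ∈ R'.E := (hR'E f).2 hfC
        refine ⟨⟨f, hfR, hw⟩, hw'V1.2.trans ?_⟩
        exact R'.rtg_of_mem_ends hfR hw' hw
      have hf0C1 : f0 ∈ C1 :=
        ⟨hf0C, w0, by rw [hends0]; exact Sym2.mem_mk_left _ _, hw0V1⟩
      have hV1G : V1 ⊆ G.V := fun z hz => (hR'V_sub hz.1).1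
      have hV1v : ∀ z ∈ V1, z ≠ v := fun z hz => (hR'V_sub hz.1).2
      -- v-attached piece machinery : translate reachability to G-edge steps in C1
      set r1 : α → α → Prop := fun a b => ∃ f ∈ C1, G.ends f = s(a, b) with hr1
      have hr1sym : ∀ a b, r1 a b → r1 b a := by
        rintro a b ⟨f, hf, hends⟩
        exact ⟨f, hf, by rw [hends, Sym2.eq_swap]⟩
      have hrtg_r1 : ∀ z, Relation.ReflTransGen R'.Adj w0 z →
          Relation.ReflTransGen r1 w0 z := by
        intro z hz
        induction hz with
        | refl => exact .refl
        | @tail b c hab hbc ih =>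
          obtain ⟨f, hfR, hends⟩ := hbc
          have hfC : f ∈ C := (hR'E f).1 hfR
          have hends' : Gc.ends f = s(b, c) := hends
          have hbV1 : b ∈ V1 :=
            ⟨⟨f, hfR, by rw [hends']; exact Sym2.mem_mk_left _ _⟩, hab⟩
          have hfC1 : f ∈ C1 := ⟨hfC, b, hends' ▸ Sym2.mem_mk_left b c, hbV1⟩
          by_cases hvf : v ∈ G.ends f
          · rw [hGcends_mem f (hCG hfC) (fun hh => heC (hh ▸ hfC)) hvf] at hends'
            obtain ⟨hb, hc⟩ := Graph.pair_eq_diag_iff.1 hends'.symm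
            exact (hb.trans hc.symm) ▸ ih
          · rw [hGcends_not f hvf] at hends'
            exact ih.tail ⟨f, hfC1, hends'⟩
      have hr1w0 : ∀ z ∈ V1, Relation.ReflTransGen r1 w0 z := fun z hz => hrtg_r1 z hz.2
      have hadj0 : r1 w0 v := ⟨f0, hf0C1, by rw [← Sym2.other_spec hvf0, Sym2.eq_swap]⟩
      have hreach_v : ∀ z ∈ V1, Relation.ReflTransGen r1 z v :=
        fun z hz => (rtg_symm hr1sym (hr1w0 z hz)).tail hadj0
      -- LOWER BOUND : stripping the piece V1 from C ∪ {e}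
      obtain ⟨d, hd⟩ := exists_descent (T := {v})
        (fun z hz => ⟨v, rfl, hreach_v z hz⟩) (fun z hz hzv => hV1v z hz hzv)
      have hCeG : C ∪ {e} ⊆ G.E := union_subset hCG (singleton_subset_iff.2 heG)
      have hesc : ∀ z ∈ V1, ∃ f ∈ C ∪ {e}, ∃ w, G.ends f = s(z, w) ∧ d w < d z := by
        intro z hz
        obtain ⟨w, ⟨f, hfC1, hends⟩, hdw⟩ := hd z hz
        exact ⟨f, Or.inl hfC1.1, w, hends, hdw⟩
      have hstrip := lstrip h3 h1.le d V1.ncard V1 (C ∪ {e}) hV1G hCeG rfl hesc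
      have hseteq : {g ∈ C ∪ {e} | ∀ x ∈ G.ends g, x ∉ V1} = (C \ C1) ∪ {e} := by
        ext g
        constructor
        · rintro ⟨hgCe, hval⟩
          rcases hgCe with hgC | hge'
          · refine Or.inl ⟨hgC, fun hgC1 => ?_⟩
            obtain ⟨-, w, hw, hwV1⟩ := hgC1
            by_cases hvg : v ∈ G.ends g
            · rw [hGcends_mem g (hCG hgC) (fun hh => heC (hh ▸ hgC)) hvg] at hw
              have hwo : w = Sym2.Mem.other hvg := Graph.mem_diag_iff.1 hw
              exact hval w (hwo ▸ Sym2.other_mem hvg) hwV1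
            · rw [hGcends_not g hvg] at hw
              exact hval w hw hwV1
          · exact Or.inr hge'
        · rintro (⟨hgC, hgC1⟩ | hge')
          · refine ⟨Or.inl hgC, fun x hx hxV1 => hgC1 ?_⟩
            by_cases hvg : v ∈ G.ends g
            · have hxv : x ≠ v := hV1v x hxV1
              have hxo : x = Sym2.Mem.other hvg := hother_eq g hvg x hx hxv
              refine ⟨hgC, x, ?_, hxV1⟩
              rw [hGcends_mem g (hCG hgC) (fun hh => heC (hh ▸ hgC)) hvg, hxo]
              exact Sym2.mem_mk_left _ _
            · refine ⟨hgC, x, ?_, hxV1⟩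
              rw [hGcends_not g hvg]
              exact hx
          · rw [mem_singleton_iff] at hge'
            subst hge'
            refine ⟨Or.inr rfl, fun x hx hxV1 => ?_⟩
            rw [hev] at hx
            exact hV1v x hxV1 (Graph.mem_diag_iff.1 hx)
      rw [hseteq] at hstrip
      have hC1C : C1 ⊆ C := fun f hf => hf.1
      have hCfin : C.Finite := hfinE.subset hCE
      have hC1fin : C1.Finite := hCfin.subset hC1C
      have hdiffss : C \ C1 ⊂ C := by
        rw [ssubset_iff_subset_ne]
        refine ⟨diff_subset, fun hh => ?_⟩
        exact (hh.symm ▸ hf0C : f0 ∈ C \ C1).2 hf0C1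
      have heCdiff : e ∉ C \ C1 := fun hh => heC hh.1
      have hranklow : rank M ((C \ C1) ∪ {e}) = (C \ C1).ncard + 1 := by
        rw [rank_indep_eq ((hCfin.diff).union (finite_singleton e)) (hind _ hdiffss),
          Set.union_singleton, Set.ncard_insert_of_notMem heCdiff (hCfin.diff)]
      have hrankCe : rank M (C ∪ {e}) = C.ncard := rank_circuit_contractM hfinE hIe hC
      have hdiffcard : (C \ C1).ncard = C.ncard - C1.ncard := Set.ncard_diff hC1C hC1fin
      have hC1le : C1.ncard ≤ C.ncard := Set.ncard_le_ncard hC1C hCfin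
      have hlow : V1.ncard + 1 ≤ C1.ncard := by omega
      -- UPPER BOUND : the piece together with e lives on V1 ∪ {v}
      have hV1K : V1 ⊆ (G.componentOf v).V := by
        intro z hz
        refine ⟨hV1G hz, ?_⟩
        have hG1 : ∀ a b, r1 a b → Relation.ReflTransGen G.Adj a b := by
          rintro a b ⟨f, hf, hends⟩
          exact Relation.ReflTransGen.single ⟨f, hCG hf.1, hends⟩
        have hGadj0 : G.Adj v w0 := ⟨f0, hf0G, (Sym2.other_spec hvf0).symm⟩
        exact (Relation.ReflTransGen.single hGadj0).trans
          (rtg_lift (f := id) hG1 (hr1w0 z hz))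
      have hTK : V1 ∪ {v} ⊆ (G.componentOf v).V := by
        rintro z (hz | hz)
        · exact hV1K hz
        · rw [mem_singleton_iff] at hz
          subst hz
          exact ⟨hvV, .refl⟩
      have hsubU : C1 ∪ {e} ⊆
          {f ∈ (G.componentOf v).E | ∀ x ∈ G.ends f, x ∈ V1 ∪ {v}} := by
        rintro f (hf | hf)
        · have hfC : f ∈ C := hC1C hf
          have hxT : ∀ x ∈ G.ends f, x ∈ V1 ∪ {v} := by
            intro x hx
            by_cases hxv : x = v
            · exact Or.inr (mem_singleton_iff.2 hxv)
            · by_cases hvf : v ∈ G.ends f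
              · have hxo : x = Sym2.Mem.other hvf := hother_eq f hvf x hx hxv
                refine Or.inl (hCL1 f hf x ?_)
                rw [hGcends_mem f (hCG hfC) (fun hh => heC (hh ▸ hfC)) hvf, hxo]
                exact Sym2.mem_mk_left _ _
              · refine Or.inl (hCL1 f hf x ?_)
                rw [hGcends_not f hvf]
                exact hx
          exact ⟨⟨hCG hfC, fun x hx => (hTK (hxT x hx)).2⟩, hxT⟩
        · rw [mem_singleton_iff] at hf
          subst hf
          refine ⟨⟨heG, fun x hx => ?_⟩, fun x hx => ?_⟩
          · rw [hev] at hx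
            rw [Graph.mem_diag_iff.1 hx]
          · rw [hev] at hx
            exact Or.inr (mem_singleton_iff.2 (Graph.mem_diag_iff.1 hx))
      -- C1 is a proper subset of C : some uᵢ is outside the piece
      have hpick : ∃ ua, ua ∈ R'.V ∧ ua ∉ V1 := by
        by_cases hu1V : u1 ∈ V1
        · by_cases hu2V : u2 ∈ V1
          · exact absurd ((rtg_symm hsymR hu1V.2).trans hu2V.2) h12
          · exact ⟨u2, hu2, hu2V⟩
        · exact ⟨u1, hu1, hu1V⟩
      obtain ⟨ua, huaR, huaV1⟩ := hpick
      obtain ⟨fa, hfaR, huaend⟩ := huaR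
      have hfa_notC1 : fa ∉ C1 := fun hh => huaV1 (hCL1 fa hh ua huaend)
      have hC1ss : C1 ⊂ C := by
        rw [ssubset_iff_subset_ne]
        exact ⟨hC1C, fun hh => hfa_notC1 (hh.symm ▸ hfaR.1)⟩
      have heC1 : e ∉ C1 := fun hh => heC (hC1C hh)
      have hrankup : rank M (C1 ∪ {e}) = C1.ncard + 1 := by
        rw [rank_indep_eq (hC1fin.union (finite_singleton e)) (hind _ hC1ss),
          Set.union_singleton, Set.ncard_insert_of_notMem heC1 hC1fin]
      have hbigfin : {f ∈ (G.componentOf v).E | ∀ x ∈ G.ends f,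
          x ∈ V1 ∪ {v}}.Finite := G.finE.subset fun f hf => hf.1.1
      have hvV1 : v ∉ V1 := fun hh => hV1v v hh rfl
      have hV1fin : V1.Finite := G.finV.subset hV1G
      have hTcard : (V1 ∪ {v}).ncard = V1.ncard + 1 := by
        rw [Set.union_singleton, Set.ncard_insert_of_notMem hvV1 hV1fin]
      have hup := calc
        C1.ncard + 1 = rank M (C1 ∪ {e}) := hrankup.symm
        _ ≤ rank M {f ∈ (G.componentOf v).E | ∀ x ∈ G.ends f, x ∈ V1 ∪ {v}} :=
          rank_mono' hbigfin hsubU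
        _ ≤ (V1 ∪ {v}).ncard := compbound h1 h2 h3 hvV hTK ⟨v, Or.inr rfl⟩
      omega
    · -- no edge of C meets v in G
      push_neg at hP
      have hendsC : ∀ f ∈ C, Gc.ends f = G.ends f := fun f hf => hGcends_not f (hP f hf)
      have hmemG : ∀ w ∈ R'.V, ∀ C' : Set β, C ⊆ C' →
          w ∈ (G.restrictEdges C').V := by
        rintro w ⟨f, hf, hw⟩ C' hsub
        have hfC : f ∈ C := hf.1
        have hw' : w ∈ Gc.ends f := hw
        rw [hendsC f hfC] at hw'
        exact ⟨f, ⟨hsub hfC, hCG hfC⟩, hw'⟩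
      by_cases hCI : M.Indep C
      · -- C ∪ {e} is a circuit of M
        have hcirc := circuit_lift_of_indep hfinE hIe hC hCI
        have hA := h4 _ hcirc
        set Rg := G.restrictEdges (C ∪ {e}) with hRg
        have hvRg : v ∈ Rg.V := ⟨e, ⟨Or.inr rfl, heG⟩, hvev⟩
        have hnoenter : ∀ z, Rg.Adj z v → z = v := by
          rintro z ⟨f, hf, hends⟩
          have hends' : G.ends f = s(z, v) := hends
          rcases hf.1 with hfC | hfe
          · exact absurd (hends'.symm ▸ Sym2.mem_mk_right z v) (hP f hfC)
          · rw [mem_singleton_iff] at hfe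
            subst hfe
            rw [hev] at hends'
            exact (Graph.pair_eq_diag_iff.1 hends'.symm).1
        have hunev : ∀ w ∈ R'.V, w ≠ v := fun w hw => (hR'V_sub hw).2
        have hnuv : ∀ w ∈ R'.V, ¬ Relation.ReflTransGen Rg.Adj w v := by
          intro w hw hrtg
          exact hunev w hw (rtg_eq_of_no_enter hnoenter hrtg rfl)
        have htrans : ∀ b, Relation.ReflTransGen Rg.Adj u1 b → b ≠ v →
            Relation.ReflTransGen R'.Adj u1 b := by
          intro b hb
          induction hb with
          | refl => exact fun _ => .refl
          | @tail b' c hab hbc ih =>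
            intro hcv
            obtain ⟨f, hf, hends⟩ := hbc
            have hends' : G.ends f = s(b', c) := hends
            have hbv : b' ≠ v := by
              intro hh
              subst hh
              exact hcv (hnoenter c (Rg.adj_symm ⟨f, hf, hends⟩))
            refine (ih hbv).tail ?_
            have hfC : f ∈ C := by
              rcases hf.1 with hfC | hfe
              · exact hfC
              · rw [mem_singleton_iff] at hfe
                subst hfe
                rw [hev] at hends'
                exact absurd (Graph.pair_eq_diag_iff.1 hends'.symm).2 hcv
            exact ⟨f, (hR'E f).2 hfC, by
              show Gc.ends f = _
              rw [hendsC f hfC]; exact hends'⟩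
        rcases hA u1 (hmemG u1 hu1 _ subset_union_left)
            u2 (hmemG u2 hu2 _ subset_union_left) v hvRg with hh | hh | hh
        · exact h12 (htrans u2 hh (hunev u2 hu2))
        · exact hnuv u1 hu1 hh
        · -- u2 joined to v : contradiction (walk from u2)
          have : ∀ b, Relation.ReflTransGen Rg.Adj u2 b → b = v → False := by
            intro b hb hbv
            exact hnuv u2 hu2 (hbv ▸ hb)
          exact this v hh rfl
      · -- C itself is a circuit of M
        have hcirc := circuit_lift_of_dep hfinE hIe hC hCI
        have hA := h4 _ hcirc
        have hstep : ∀ a b, (G.restrictEdges C).Adj a b → R'.Adj a b := by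
          rintro a b ⟨f, hf, hends⟩
          have hends' : G.ends f = s(a, b) := hends
          exact ⟨f, (hR'E f).2 hf.1, by
            show Gc.ends f = _
            rw [hendsC f hf.1]; exact hends'⟩
        have hliftW : ∀ {a b}, Relation.ReflTransGen (G.restrictEdges C).Adj a b →
            Relation.ReflTransGen R'.Adj a b := fun hab =>
          rtg_lift (f := id) (fun a b hh => Relation.ReflTransGen.single (hstep a b hh)) hab
        rcases hA u1 (hmemG u1 hu1 _ (le_refl _)) u2 (hmemG u2 hu2 _ (le_refl _))
            u3 (hmemG u3 hu3 _ (le_refl _)) with hh | hh | hh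
        · exact h12 (hliftW hh)
        · exact h13 (hliftW hh)
        · exact h23 (hliftW hh)

end PartC

/-- Let `G` be a framework for a matroid `M` and let `e ∈ E(M)`. Then
(a) `G − e` is a framework for `M \ e`; (b) if `e` is a non-loop-edge of `G` with
endpoints `x ≠ y`, then `G/e` is a framework for `M/e`; and (c) if `e` is a loop-edge of
`G` at a vertex `v` with no other loop-edge at `v`, and `e` is not a loop of `M`, then
`G∘e` is a framework for `M/e`. -/
theorem statement16 {α : Type u} {β : Type v} (G : Graph α β) (M : Matroid β)
    (h : Framework G M) (e : β) (he : e ∈ M.E) :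
    Framework (G.deleteEdge e) (deleteM M {e}) ∧
    (∀ (x y : α) (heG : e ∈ G.E) (hxy : G.ends e = s(x, y)) (hne : x ≠ y),
      Framework (G.contractEdge e x y heG hxy hne) (contractM M {e})) ∧
    (∀ (v : α), G.IsLoopAt e v → M.Indep {e} →
      ∀ hno : ∀ f ∈ G.E, G.ends f = Sym2.diag v → f = e,
        Framework (G.circ e v hno) (contractM M {e})) := by
  exact ⟨part_a G M h e,
    fun x y heG hxy hne => part_b G M h e x y heG hxy hne,
    fun v hloop hIe hno => part_c G M h e v hloop hIe hno⟩

end QuasiGraphicPaper
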